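/- arXiv:1806.09101 — 10 statements merged into one kernel-verified Lean document; each statement's English description precedes it below -/
import Mathlib

section
/- Theorem 2.1 (sufficiency direction of the lumpability criterion): Let T be a column-stochastic N×N matrix and c : Fin N → Fin M a coarse-graining map. Assume T satisfies the lumpability condition with lumped matrix 𝒢, i.e. for all mesostates α, β and every y with c y = β, ∑_{x : c x = α} T x y = 𝒢 α β (the block column sums are independent of the representative y). Then 𝒢 is column-stochastic and for every probability vector p on Fin N, every n ≥ 1 and all mesostates α₀, …, αₙ, the lumped joint probability ∑_{x₀,…,xₙ : c x_k = α_k for all k} T xₙ x_{n−1} ⋯ T x₁ x₀ · p x₀ equals 𝒢 αₙ α_{n−1} ⋯ 𝒢 α₁ α₀ · (Λp) α₀; hence the lumped process is a homogeneous Markov chain with transition matrix 𝒢 independent of the initial distribution. -/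
open Finset

/-- Coarse-graining operator: `(Λ p) α = ∑_{x : c x = α} p x`. -/
noncomputable def lump {N M : ℕ} (c : Fin N → Fin M) (p : Fin N → ℝ) : Fin M → ℝ :=
  fun α => ∑ x, if c x = α then p x else 0

/-- Joint probability that the lumped process visits the mesostates
`α 0, α 1, …, α n` at times `0, τ, …, nτ`, for microscopic transition matrix `T`
and initial microstate distribution `p`. -/
noncomputable def pathProb {N M : ℕ} (T : Matrix (Fin N) (Fin N) ℝ) (c : Fin N → Fin M)
    (p : Fin N → ℝ) (n : ℕ) (α : Fin (n + 1) → Fin M) : ℝ :=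
  ∑ x : Fin (n + 1) → Fin N,
    if ∀ k, c (x k) = α k then (∏ k : Fin n, T (x k.succ) (x k.castSucc)) * p (x 0) else 0

lemma pathProb_key {N M : ℕ} (T : Matrix (Fin N) (Fin N) ℝ) (c : Fin N → Fin M)
    (G : Matrix (Fin M) (Fin M) ℝ)
    (hlump : ∀ α β (y : Fin N), c y = β → (∑ x, if c x = α then T x y else 0) = G α β)
    (p : Fin N → ℝ) :
    ∀ n (α : Fin (n + 1) → Fin M),
      pathProb T c p n α =
        (∏ k : Fin n, G (α k.succ) (α k.castSucc)) * lump c p (α 0) := by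
  intro n
  induction n with
  | zero =>
    intro α
    rw [pathProb, ← (Fintype.sum_equiv (Equiv.funUnique (Fin 1) (Fin N)).symm _
      (fun x => if ∀ k, c (x k) = α k then (∏ k : Fin 0, T (x k.succ) (x k.castSucc)) * p (x 0) else 0)
      (fun y => rfl))]
    simp [lump, Fin.forall_fin_one]
  | succ n ih =>
    intro α
    have hsnoc : pathProb T c p (n+1) α =
        ∑ f : Fin (n+1) → Fin N, ∑ a : Fin N,
          (if ∀ k, c ((Fin.snoc f a : Fin (n+2) → Fin N) k) = α k then
            (∏ k : Fin (n+1), T ((Fin.snoc f a : Fin (n+2) → Fin N) k.succ) ((Fin.snoc f a : Fin (n+2) → Fin N) k.castSucc)) *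
              p ((Fin.snoc f a : Fin (n+2) → Fin N) 0) else 0) := by
      rw [pathProb, ← (Fin.snocEquiv (fun _ => Fin N)).sum_comp, Fintype.sum_prod_type_right]
      rfl
    rw [hsnoc]
    have hstep : ∀ f : Fin (n+1) → Fin N,
        (∑ a : Fin N,
          if ∀ k, c ((Fin.snoc f a : Fin (n+2) → Fin N) k) = α k then
            (∏ k : Fin (n+1), T ((Fin.snoc f a : Fin (n+2) → Fin N) k.succ) ((Fin.snoc f a : Fin (n+2) → Fin N) k.castSucc)) *
              p ((Fin.snoc f a : Fin (n+2) → Fin N) 0) else 0) =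
        G (α (Fin.last (n+1))) (α ((Fin.last n).castSucc)) *
          (if ∀ k : Fin (n+1), c (f k) = α k.castSucc then
            (∏ k : Fin n, T (f k.succ) (f k.castSucc)) * p (f 0) else 0) := by
      intro f
      by_cases hf : ∀ k : Fin (n+1), c (f k) = α k.castSucc
      · rw [if_pos hf]
        have hcond : ∀ a : Fin N, (∀ k, c ((Fin.snoc f a : Fin (n+2) → Fin N) k) = α k) ↔ c a = α (Fin.last (n+1)) := by
          intro a
          constructor
          · intro h
            have := h (Fin.last (n+1))
            simpa using this
          · intro h k
            induction k using Fin.lastCases with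
            | last => simpa using h
            | cast j => simpa using hf j
        have hprod : ∀ a : Fin N,
            (∏ k : Fin (n+1), T ((Fin.snoc f a : Fin (n+2) → Fin N) k.succ) ((Fin.snoc f a : Fin (n+2) → Fin N) k.castSucc)) =
            T a (f (Fin.last n)) * ∏ k : Fin n, T (f k.succ) (f k.castSucc) := by
          intro a
          rw [Fin.prod_univ_castSucc]
          simp [Fin.succ_castSucc, -Fin.castSucc_succ, mul_comm]
        calc (∑ a : Fin N,
            if ∀ k, c ((Fin.snoc f a : Fin (n+2) → Fin N) k) = α k then
              (∏ k : Fin (n+1), T ((Fin.snoc f a : Fin (n+2) → Fin N) k.succ) ((Fin.snoc f a : Fin (n+2) → Fin N) k.castSucc)) *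
                p ((Fin.snoc f a : Fin (n+2) → Fin N) 0) else 0)
            = ∑ a : Fin N, (if c a = α (Fin.last (n+1)) then T a (f (Fin.last n)) else 0) *
                ((∏ k : Fin n, T (f k.succ) (f k.castSucc)) * p (f 0)) := by
              apply Finset.sum_congr rfl
              intro a _
              rw [hprod a]
              by_cases h : c a = α (Fin.last (n+1))
              · rw [if_pos ((hcond a).mpr h), if_pos h]
                have h0 : (Fin.snoc f a : Fin (n+2) → Fin N) 0 = f 0 :=
                  by simpa using @Fin.snoc_castSucc (n+1) (fun _ => Fin N) a f 0
                rw [h0]; ring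
              · rw [if_neg (fun hh => h ((hcond a).mp hh)), if_neg h, zero_mul]
          _ = G (α (Fin.last (n+1))) (α ((Fin.last n).castSucc)) *
                ((∏ k : Fin n, T (f k.succ) (f k.castSucc)) * p (f 0)) := by
              rw [← Finset.sum_mul, hlump _ _ (f (Fin.last n)) (hf (Fin.last n))]
      · rw [if_neg hf, mul_zero]
        apply Finset.sum_eq_zero
        intro a _
        rw [if_neg]
        intro h
        exact hf fun k => by simpa using h k.castSucc
    simp_rw [hstep]
    rw [← Finset.mul_sum]
    have hIH := ih (fun k => α k.castSucc)
    rw [pathProb] at hIH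
    rw [hIH, Fin.prod_univ_castSucc (f := fun k : Fin (n+1) => G (α k.succ) (α k.castSucc))]
    simp
    ring
/-- **Theorem 2.1, sufficiency direction of the lumpability criterion.**
If the block column sums of a column-stochastic matrix `T` are independent of the
representative microstate, i.e. `∑_{x : c x = α} T x y = 𝒢 α β` for all `y` with `c y = β`,
then `𝒢` is column-stochastic and the lumped process is a homogeneous Markov chain with
transition matrix `𝒢`, independently of the initial distribution. -/
theorem lumpability_sufficient {N M : ℕ} (T : Matrix (Fin N) (Fin N) ℝ)
    (c : Fin N → Fin M) (hc : Function.Surjective c)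
    (hTnonneg : ∀ x y, 0 ≤ T x y) (hTsum : ∀ y, ∑ x, T x y = 1)
    (G : Matrix (Fin M) (Fin M) ℝ)
    (hlump : ∀ α β (y : Fin N), c y = β → (∑ x, if c x = α then T x y else 0) = G α β) :
    ((∀ α β, 0 ≤ G α β) ∧ ∀ β, ∑ α, G α β = 1) ∧
      ∀ p : Fin N → ℝ, (∀ x, 0 ≤ p x) → (∑ x, p x = 1) →
        ∀ n : ℕ, 1 ≤ n → ∀ α : Fin (n + 1) → Fin M,
          pathProb T c p n α =
            (∏ k : Fin n, G (α k.succ) (α k.castSucc)) * lump c p (α 0) := by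
  refine ⟨⟨?_, ?_⟩, ?_⟩
  · intro α β
    obtain ⟨y, hy⟩ := hc β
    rw [← hlump α β y hy]
    apply Finset.sum_nonneg
    intro x _
    split; · exact hTnonneg x y
    · exact le_refl 0
  · intro β
    obtain ⟨y, hy⟩ := hc β
    have : ∀ α, G α β = ∑ x, if c x = α then T x y else 0 := fun α => (hlump α β y hy).symm
    simp_rw [this]
    rw [Finset.sum_comm]
    have : ∀ x : Fin N, (∑ α, if c x = α then T x y else 0) = T x y := by
      intro x
      rw [Finset.sum_ite_eq]
      simp
    simp_rw [this]
    exact hTsum y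
  · intro p _ _ n _ α
    exact pathProb_key T c G hlump p n α
end

section
/- Theorem 2.1 (necessity direction of the lumpability criterion): Let T be a column-stochastic N×N matrix and c : Fin N → Fin M a coarse-graining map. Suppose there exists a matrix 𝒢 such that for every probability vector p on Fin N and every mesostate β with (Λp) β > 0, the one-step lumped transition probability (1/(Λp) β) · ∑_{x : c x = α} ∑_{y : c y = β} T x y · p y equals 𝒢 α β for every α (i.e. the one-step transition probabilities of the lumped process are independent of the initial distribution). Then for all β, all y, y' with c y = c y' = β, and all α: ∑_{x : c x = α} T x y = ∑_{x : c x = α} T x y' = 𝒢 α β. -/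
open Finset

lemma key {N M : ℕ} (T : Matrix (Fin N) (Fin N) ℝ)
    (c : Fin N → Fin M)
    (G : Matrix (Fin M) (Fin M) ℝ)
    (hTnonneg : ∀ x y, 0 ≤ T x y)
    (h : ∀ p : Fin N → ℝ, (∀ x, 0 ≤ p x) → (∑ x, p x = 1) →
      ∀ β, 0 < lump c p β →
        ∀ α, (1 / lump c p β) *
          (∑ x, ∑ y, if c x = α ∧ c y = β then T x y * p y else 0) = G α β)
    (β : Fin M) (y : Fin N) (hy : c y = β) (α : Fin M) :
    (∑ x, if c x = α then T x y else 0) = G α β := by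
  set p : Fin N → ℝ := fun z => if z = y then 1 else 0 with hp
  have hpn : ∀ x, 0 ≤ p x := by intro x; simp [hp]; split <;> norm_num
  have hps : ∑ x, p x = 1 := by simp [hp]
  have hl : (∑ x, if c x = β then p x else 0) = 1 := by
    rw [Finset.sum_eq_single y]
    · simp [hp, hy]
    · intro b _ hb; simp [hp, hb]
    · simp
  have := h p hpn hps β (by simp [lump, hl]) α
  simp only [lump, hl, one_div, inv_one, one_mul] at this
  rw [← this]
  congr 1
  ext x
  rw [Finset.sum_eq_single y]
  · simp [hp, hy]
  · intro b _ hb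
    simp [hp, hb]
  · simp

/-- **Theorem 2.1, necessity direction of the lumpability criterion.**
If the one-step transition probabilities of the lumped process are independent of the
initial distribution (given by a fixed matrix `𝒢`), then the block column sums of `T`
do not depend on the representative microstate:
`∑_{x : c x = α} T x y = ∑_{x : c x = α} T x y' = 𝒢 α β` whenever `c y = c y' = β`. -/
theorem lumpability_necessary {N M : ℕ} (T : Matrix (Fin N) (Fin N) ℝ)
    (c : Fin N → Fin M)
    (hTnonneg : ∀ x y, 0 ≤ T x y) (hTsum : ∀ y, ∑ x, T x y = 1)
    (G : Matrix (Fin M) (Fin M) ℝ)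
    (h : ∀ p : Fin N → ℝ, (∀ x, 0 ≤ p x) → (∑ x, p x = 1) →
      ∀ β, 0 < lump c p β →
        ∀ α, (1 / lump c p β) *
          (∑ x, ∑ y, if c x = α ∧ c y = β then T x y * p y else 0) = G α β) :
    ∀ (β : Fin M) (y y' : Fin N), c y = β → c y' = β → ∀ α,
      (∑ x, if c x = α then T x y else 0) = G α β ∧
      (∑ x, if c x = α then T x y' else 0) = G α β := by
  intro β y y' hy hy' α
  exact ⟨key T c G hTnonneg h β y hy α, key T c G hTnonneg h β y' hy' α⟩
end

section
/- Corollary 2.1 (lumpable master equation, autonomous case): Let W be an N×N rate matrix (nonnegative off-diagonal entries, every column sums to 0) and c : Fin N → Fin M a coarse-graining map. Assume the lumpability condition: for all α, β and all y, y' with c y = c y' = β, ∑_{x : c x = α} W x y = ∑_{x : c x = α} W x y' =: 𝒱 α β. Then 𝒱 is a rate matrix on Fin M, and Λ · exp(t W) = exp(t 𝒱) · Λ for every t ∈ ℝ; in particular, for every solution p(t) = exp(t W) p(0) of the master equation d/dt p = W p, the lumped state Λ p(t) solves the lumped master equation d/dt (Λ p) = 𝒱 (Λ p). -/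
open Matrix Finset

/-- The coarse-graining operator `Λ` as an `M × N` matrix:
`Λ α x = 1` if `c x = α` and `0` otherwise. -/
noncomputable def lumpMat {N M : ℕ} (c : Fin N → Fin M) : Matrix (Fin M) (Fin N) ℝ :=
  Matrix.of fun α x => if c x = α then (1 : ℝ) else 0

lemma lump_eq_mulVec {N M : ℕ} (c : Fin N → Fin M) (p : Fin N → ℝ) :
    lump c p = lumpMat c *ᵥ p := by
  funext α
  simp [lump, lumpMat, Matrix.mulVec, dotProduct, ite_mul]

/-- Intertwining: if `X * A = B * X` then `X * exp A = exp B * X`. -/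
lemma intertwine_exp {N M : ℕ} (X : Matrix (Fin M) (Fin N) ℝ)
    (A : Matrix (Fin N) (Fin N) ℝ) (B : Matrix (Fin M) (Fin M) ℝ)
    (h : X * A = B * X) :
    X * NormedSpace.exp A = NormedSpace.exp B * X := by
  letI : NormedRing (Matrix (Fin N) (Fin N) ℝ) := Matrix.linftyOpNormedRing
  letI : NormedAlgebra ℝ (Matrix (Fin N) (Fin N) ℝ) := Matrix.linftyOpNormedAlgebra
  letI : NormedRing (Matrix (Fin M) (Fin M) ℝ) := Matrix.linftyOpNormedRing
  letI : NormedAlgebra ℝ (Matrix (Fin M) (Fin M) ℝ) := Matrix.linftyOpNormedAlgebra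
  letI : NormedAddCommGroup (Matrix (Fin M) (Fin N) ℝ) := Matrix.linftyOpNormedAddCommGroup
  letI : NormedSpace ℝ (Matrix (Fin M) (Fin N) ℝ) := Matrix.linftyOpNormedSpace
  have hpow : ∀ n : ℕ, X * A ^ n = B ^ n * X := by
    intro n
    induction n with
    | zero => simp
    | succ n ih =>
      rw [pow_succ, pow_succ, ← Matrix.mul_assoc, ih, Matrix.mul_assoc, h,
        ← Matrix.mul_assoc]
  -- left multiplication by X as a continuous linear map
  let Llin : Matrix (Fin N) (Fin N) ℝ →ₗ[ℝ] Matrix (Fin M) (Fin N) ℝ :=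
    { toFun := fun C => X * C
      map_add' := fun C D => Matrix.mul_add X C D
      map_smul' := fun r C => (Matrix.mul_smul X r C) }
  let L : Matrix (Fin N) (Fin N) ℝ →L[ℝ] Matrix (Fin M) (Fin N) ℝ :=
    LinearMap.toContinuousLinearMap Llin
  let Rlin : Matrix (Fin M) (Fin M) ℝ →ₗ[ℝ] Matrix (Fin M) (Fin N) ℝ :=
    { toFun := fun C => C * X
      map_add' := fun C D => Matrix.add_mul C D X
      map_smul' := fun r C => (Matrix.smul_mul r C X) }
  let R : Matrix (Fin M) (Fin M) ℝ →L[ℝ] Matrix (Fin M) (Fin N) ℝ :=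
    LinearMap.toContinuousLinearMap Rlin
  have hL : X * NormedSpace.exp A = L (NormedSpace.exp A) := rfl
  have hR : NormedSpace.exp B * X = R (NormedSpace.exp B) := rfl
  rw [hL, hR, NormedSpace.exp_eq_tsum ℝ, NormedSpace.exp_eq_tsum ℝ,
    L.map_tsum (NormedSpace.expSeries_summable' (𝕂 := ℝ) A),
    R.map_tsum (NormedSpace.expSeries_summable' (𝕂 := ℝ) B)]
  congr 1
  funext n
  show X * ((n.factorial : ℝ)⁻¹ • A ^ n) = ((n.factorial : ℝ)⁻¹ • B ^ n) * X
  rw [Matrix.mul_smul, Matrix.smul_mul, hpow]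

/-- **Corollary 2.1 (lumpable master equation, autonomous case).**
Let `W` be a rate matrix (nonnegative off-diagonal entries, columns summing to `0`)
satisfying the lumpability condition `∑_{x : c x = α} W x y = 𝒱 α β` for every `y` with
`c y = β`. Then `𝒱` is a rate matrix and `Λ · exp(t W) = exp(t 𝒱) · Λ` for all `t`;
in particular every solution `p(t) = exp(t W) p(0)` of the master equation has a lumped
state `Λ p(t)` solving the lumped master equation `d/dt (Λ p) = 𝒱 (Λ p)`. -/
theorem lumpable_master_equation {N M : ℕ} (c : Fin N → Fin M) (hc : Function.Surjective c)
    (W : Matrix (Fin N) (Fin N) ℝ)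
    (hWoff : ∀ x y, x ≠ y → 0 ≤ W x y) (hWsum : ∀ y, ∑ x, W x y = 0)
    (V : Matrix (Fin M) (Fin M) ℝ)
    (hlump : ∀ α β (y : Fin N), c y = β → (∑ x, if c x = α then W x y else 0) = V α β) :
    ((∀ α β, α ≠ β → 0 ≤ V α β) ∧ ∀ β, ∑ α, V α β = 0) ∧
    (∀ t : ℝ, lumpMat c * NormedSpace.exp (t • W) = NormedSpace.exp (t • V) * lumpMat c) ∧
    ∀ (p₀ : Fin N → ℝ) (t : ℝ) (α : Fin M),
      HasDerivAt (fun s : ℝ => lump c (NormedSpace.exp (s • W) *ᵥ p₀) α)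
        ((V *ᵥ lump c (NormedSpace.exp (t • W) *ᵥ p₀)) α) t := by
  -- the key algebraic identity: Λ W = V Λ
  have hLW : lumpMat c * W = V * lumpMat c := by
    ext α y
    have h1 : (lumpMat c * W) α y = ∑ x, if c x = α then W x y else 0 := by
      simp [lumpMat, Matrix.mul_apply, ite_mul]
    have h2 : (V * lumpMat c) α y = V α (c y) := by
      simp [lumpMat, Matrix.mul_apply, mul_ite]
    rw [h1, h2, hlump α (c y) y rfl]
  have hcomm : ∀ t : ℝ, lumpMat c * (t • W) = (t • V) * lumpMat c := by
    intro t
    rw [Matrix.mul_smul, hLW, Matrix.smul_mul]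
  have hexp : ∀ t : ℝ,
      lumpMat c * NormedSpace.exp (t • W) = NormedSpace.exp (t • V) * lumpMat c :=
    fun t => intertwine_exp _ _ _ (hcomm t)
  refine ⟨⟨?_, ?_⟩, hexp, ?_⟩
  · -- nonnegative off-diagonal entries
    intro α β hab
    obtain ⟨y, hy⟩ := hc β
    rw [← hlump α β y hy]
    apply Finset.sum_nonneg
    intro x _
    by_cases hx : c x = α
    · have hxy : x ≠ y := by
        rintro rfl
        exact hab (hx ▸ hy ▸ rfl)
      simp [hx, hWoff x y hxy]
    · simp [hx]
  · -- columns sum to zero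
    intro β
    obtain ⟨y, hy⟩ := hc β
    have : ∀ α, V α β = ∑ x, if c x = α then W x y else 0 := fun α => (hlump α β y hy).symm
    simp_rw [this]
    rw [Finset.sum_comm]
    have : ∀ x : Fin N, (∑ α, if c x = α then W x y else 0) = W x y := by
      intro x
      simp
    simp_rw [this]
    exact hWsum y
  · -- the lumped master equation
    intro p₀ t α
    letI : NormedRing (Matrix (Fin M) (Fin M) ℝ) := Matrix.linftyOpNormedRing
    letI : NormedAlgebra ℝ (Matrix (Fin M) (Fin M) ℝ) := Matrix.linftyOpNormedAlgebra
    set q : Fin M → ℝ := lumpMat c *ᵥ p₀ with hq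
    have hfun : ∀ s : ℝ,
        lump c (NormedSpace.exp (s • W) *ᵥ p₀) α = (NormedSpace.exp (s • V) *ᵥ q) α := by
      intro s
      rw [lump_eq_mulVec, Matrix.mulVec_mulVec, hexp s, ← Matrix.mulVec_mulVec]
    have hval : (V *ᵥ lump c (NormedSpace.exp (t • W) *ᵥ p₀)) α
        = ((V * NormedSpace.exp (t • V)) *ᵥ q) α := by
      rw [lump_eq_mulVec, Matrix.mulVec_mulVec, Matrix.mulVec_mulVec, Matrix.mul_assoc,
        hexp t, ← Matrix.mul_assoc, ← Matrix.mulVec_mulVec]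
    simp only [hfun, hval]
    -- the coordinate functional as a continuous linear map
    let φlin : Matrix (Fin M) (Fin M) ℝ →ₗ[ℝ] ℝ :=
      { toFun := fun C => (C *ᵥ q) α
        map_add' := fun C D => by simp [Matrix.add_mulVec]
        map_smul' := fun r C => by simp [Matrix.smul_mulVec] }
    let φ : Matrix (Fin M) (Fin M) ℝ →L[ℝ] ℝ := LinearMap.toContinuousLinearMap φlin
    have hexpderiv : HasDerivAt (fun s : ℝ => NormedSpace.exp (s • V))
        (V * NormedSpace.exp (t • V)) t := hasDerivAt_exp_smul_const' V t
    have := (φ.hasFDerivAt.comp_hasDerivAt t hexpderiv)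
    exact this
end

section
/- Theorem 2.2 (nonnegative entropy production rate, instantaneous form): Let V be an M×M rate matrix (nonnegative off-diagonal entries, every column sums to 0) — the generator of the mesolevel master equation at an instant where the dynamics is 1-Markovian — let π be a strictly positive probability vector on Fin M with V π = 0 (π is an instantaneous fixed point of the generator), and let p be a strictly positive probability vector on Fin M. Then the entropy production rate Σ̇ = −∑_α (V p)_α · (log p_α − log π_α) is nonnegative. -/
open Matrix Finset

/-- **Theorem 2.2 (nonnegative entropy production rate, instantaneous form).**
Let `V` be a rate matrix (nonnegative off-diagonal entries, columns summing to `0`),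
the generator of the mesolevel master equation at an instant where the dynamics is
1-Markovian, let `π` be a strictly positive probability vector with `V π = 0`
(an instantaneous fixed point), and let `p` be a strictly positive probability vector.
Then the entropy production rate `Σ̇ = −∑_α (V p)_α (log p_α − log π_α)` is nonnegative. -/
theorem entropy_production_rate_nonneg {M : ℕ} (V : Matrix (Fin M) (Fin M) ℝ)
    (hVoff : ∀ α β, α ≠ β → 0 ≤ V α β) (hVsum : ∀ β, ∑ α, V α β = 0)
    (π : Fin M → ℝ) (hπpos : ∀ α, 0 < π α) (hπsum : ∑ α, π α = 1)
    (hfix : V *ᵥ π = 0)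
    (p : Fin M → ℝ) (hppos : ∀ α, 0 < p α) (hpsum : ∑ α, p α = 1) :
    0 ≤ -∑ α, (V *ᵥ p) α * (Real.log (p α) - Real.log (π α)) := by
  set L : Fin M → ℝ := fun α => Real.log (p α) - Real.log (π α) with hLdef
  have hfix' : ∀ α, ∑ β, V α β * π β = 0 := by
    intro α
    have := congrFun hfix α
    simpa [mulVec, dotProduct] using this
  have key : -∑ α, (V *ᵥ p) α * L α = ∑ α, ∑ β, V α β * p β * (L β - L α) := by
    simp only [mul_sub, Finset.sum_sub_distrib]
    have h2 : ∑ α : Fin M, ∑ β, V α β * p β * L β = 0 := by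
      rw [Finset.sum_comm]
      refine Finset.sum_eq_zero fun β _ => ?_
      have : ∑ α, V α β * p β * L β = (∑ α, V α β) * (p β * L β) := by
        rw [Finset.sum_mul]; simp [mul_assoc]
      rw [this, hVsum, zero_mul]
    have h3 : ∀ α, ∑ β, V α β * p β * L α = (V *ᵥ p) α * L α := by
      intro α
      rw [mulVec, dotProduct, Finset.sum_mul]
    simp [h2, h3]
  have hzero : ∑ α : Fin M, ∑ β, (V α β * p β - V α β * π β * (p α / π α)) = 0 := by
    simp only [Finset.sum_sub_distrib]
    have h4 : ∑ α : Fin M, ∑ β, V α β * p β = 0 := by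
      rw [Finset.sum_comm]
      refine Finset.sum_eq_zero fun β _ => ?_
      rw [← Finset.sum_mul, hVsum, zero_mul]
    have h5 : ∑ α : Fin M, ∑ β, V α β * π β * (p α / π α) = 0 := by
      refine Finset.sum_eq_zero fun α _ => ?_
      rw [← Finset.sum_mul, hfix' α, zero_mul]
    rw [h4, h5, sub_zero]
  have hterm : ∀ α β, V α β * p β - V α β * π β * (p α / π α)
      ≤ V α β * p β * (L β - L α) := by
    intro α β
    rcases eq_or_ne α β with rfl | hne
    · have hπ := (hπpos α).ne'
      have : V α α * π α * (p α / π α) = V α α * p α := by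
        field_simp
      rw [this]; simp
    · have hV := hVoff α β hne
      have hpα := hppos α; have hpβ := hppos β
      have hπα := hπpos α; have hπβ := hπpos β
      set x : ℝ := (p β * π α) / (π β * p α) with hx
      have hxpos : 0 < x := by positivity
      have hlog : L β - L α = Real.log x := by
        simp only [hLdef, hx]
        rw [Real.log_div (by positivity) (by positivity),
            Real.log_mul hpβ.ne' hπα.ne', Real.log_mul hπβ.ne' hpα.ne']
        ring
      have hineq : 1 - x⁻¹ ≤ Real.log x := by
        have h := Real.log_le_sub_one_of_pos (show (0:ℝ) < x⁻¹ by positivity)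
        rw [Real.log_inv] at h
        linarith
      have hrw : V α β * p β - V α β * π β * (p α / π α)
          = (V α β * p β) * (1 - x⁻¹) := by
        rw [hx]
        have h1 := hpβ.ne'; have h2 := hπβ.ne'
        have h3 := hπα.ne'; have h4 := hpα.ne'
        field_simp
      rw [hrw, hlog]
      exact mul_le_mul_of_nonneg_left hineq (by positivity)
  calc (0:ℝ) = ∑ α : Fin M, ∑ β, (V α β * p β - V α β * π β * (p α / π α)) := hzero.symm
    _ ≤ ∑ α, ∑ β, V α β * p β * (L β - L α) :=
        Finset.sum_le_sum fun α _ => Finset.sum_le_sum fun β _ => hterm α β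
    _ = -∑ α, (V *ᵥ p) α * L α := key.symm
end

section
/- Theorem 2.4: Let (T_t)_{t ≥ 0} be a family of column-stochastic N×N matrices with T_t π = π for all t, where π is a strictly positive probability vector on Fin N (the steady state of the undriven microscopic process). Let c : Fin N → Fin M be a coarse-graining map and define the lumped propagator for conditionally equilibrated initial states by G_t α β = ∑_{x : c x = α} ∑_{y : c y = β} T_t x y · π y / (Λπ) β. Then: (i) G_t (Λπ) = Λπ for every t ≥ 0; (ii) if moreover each G_t is invertible and t ↦ G_t is differentiable, then the time-local generator V(t) = (d/dt G_t) · G_t⁻¹ of the exact mesolevel master equation satisfies V(t) (Λπ) = 0, i.e. the marginal steady state Λπ is an instantaneous fixed point of the mesolevel dynamics at every time. -/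
open Matrix Finset

/-- **Theorem 2.4.** For an undriven microscopic process with column-stochastic propagators
`T_t` having the strictly positive steady state `π` (`T_t π = π`), the lumped propagator
for conditionally equilibrated initial states,
`G_t α β = ∑_{x : c x = α} ∑_{y : c y = β} T_t x y · π y / (Λπ) β`, satisfies:
(i) `G_t (Λπ) = Λπ` for every `t ≥ 0`; and (ii) if each `G_t` is invertible and
`t ↦ G_t` is differentiable, then the time-local generator `V(t) = (d/dt G_t) · G_t⁻¹`
satisfies `V(t) (Λπ) = 0`, i.e. the marginal steady state `Λπ` is an instantaneous fixed
point of the mesolevel dynamics at every time. -/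
theorem undriven_marginal_steady_state_is_IFP {N M : ℕ} (c : Fin N → Fin M)
    (T : ℝ → Matrix (Fin N) (Fin N) ℝ)
    (π : Fin N → ℝ) (hπpos : ∀ x, 0 < π x) (hπsum : ∑ x, π x = 1)
    (hTnonneg : ∀ t, 0 ≤ t → ∀ x y, 0 ≤ T t x y)
    (hTsum : ∀ t, 0 ≤ t → ∀ y, ∑ x, T t x y = 1)
    (hTfix : ∀ t, 0 ≤ t → T t *ᵥ π = π)
    (G : ℝ → Matrix (Fin M) (Fin M) ℝ)
    (hG : ∀ t α β,
      G t α β = ∑ x, ∑ y, if c x = α ∧ c y = β then T t x y * π y / lump c π β else 0) :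
    (∀ t, 0 ≤ t → G t *ᵥ lump c π = lump c π) ∧
    ∀ G' : ℝ → Matrix (Fin M) (Fin M) ℝ,
      (∀ t, 0 ≤ t → IsUnit (G t)) →
      (∀ t, 0 ≤ t → ∀ α β, HasDerivAt (fun s => G s α β) (G' t α β) t) →
      ∀ t, 0 ≤ t → (G' t * (G t)⁻¹) *ᵥ lump c π = 0 := by
  have hfib : ∀ β y, lump c π β = 0 → c y = β → False := by
    intro β y h0 hy
    have h1 : π y ≤ lump c π β := by
      unfold lump
      calc π y = if c y = β then π y else 0 := by simp [hy]
        _ ≤ ∑ x, if c x = β then π x else 0 :=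
          Finset.single_le_sum (f := fun x => if c x = β then π x else 0)
            (fun x _ => by by_cases h : c x = β <;> simp [h, (hπpos x).le])
            (Finset.mem_univ y)
    rw [h0] at h1
    exact absurd h1 (not_le.mpr (hπpos y))
  have key : ∀ t, 0 ≤ t → ∀ α, ∑ β, G t α β * lump c π β = lump c π α := by
    intro t ht α
    have step1 : ∀ β, G t α β * lump c π β
        = ∑ x, ∑ y, if c x = α ∧ c y = β then T t x y * π y else 0 := by
      intro β
      rw [hG]
      by_cases h0 : lump c π β = 0
      · rw [h0, mul_zero]
        symm
        refine Finset.sum_eq_zero fun x _ => Finset.sum_eq_zero fun y _ => ?_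
        split_ifs with h
        · exact (hfib β y h0 h.2).elim
        · rfl
      · rw [Finset.sum_mul]
        refine Finset.sum_congr rfl fun x _ => ?_
        rw [Finset.sum_mul]
        refine Finset.sum_congr rfl fun y _ => ?_
        split_ifs with h
        · rw [div_mul_cancel₀ _ h0]
        · rw [zero_mul]
    calc ∑ β, G t α β * lump c π β
        = ∑ β, ∑ x, ∑ y, if c x = α ∧ c y = β then T t x y * π y else 0 :=
          Finset.sum_congr rfl fun β _ => step1 β
      _ = ∑ x, ∑ y, ∑ β, if c x = α ∧ c y = β then T t x y * π y else 0 := by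
          rw [Finset.sum_comm]
          exact Finset.sum_congr rfl fun x _ => Finset.sum_comm
      _ = ∑ x, ∑ y, if c x = α then T t x y * π y else 0 := by
          refine Finset.sum_congr rfl fun x _ => Finset.sum_congr rfl fun y _ => ?_
          by_cases hx : c x = α <;> simp [hx]
      _ = ∑ x, if c x = α then π x else 0 := by
          refine Finset.sum_congr rfl fun x _ => ?_
          have hfx := congrFun (hTfix t ht) x
          simp only [Matrix.mulVec, dotProduct] at hfx
          by_cases hx : c x = α <;> simp [hx, hfx]
      _ = lump c π α := rfl
  have hfix : ∀ t, 0 ≤ t → G t *ᵥ lump c π = lump c π := by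
    intro t ht
    funext α
    simpa [Matrix.mulVec, dotProduct] using key t ht α
  refine ⟨hfix, ?_⟩
  intro G' hGinv hGderiv t ht
  have hGinvfix : (G t)⁻¹ *ᵥ lump c π = lump c π := by
    have h := congrArg (fun v => (G t)⁻¹ *ᵥ v) (hfix t ht)
    simpa [Matrix.mulVec_mulVec,
      Matrix.nonsing_inv_mul _ ((Matrix.isUnit_iff_isUnit_det _).mp (hGinv t ht))] using h.symm
  have hderiv0 : G' t *ᵥ lump c π = 0 := by
    funext α
    have hd : HasDerivAt (fun s => ∑ β, G s α β * lump c π β)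
        (∑ β, G' t α β * lump c π β) t :=
      HasDerivAt.fun_sum fun β _ => (hGderiv t ht α β).mul_const _
    have hdw : HasDerivWithinAt (fun s => ∑ β, G s α β * lump c π β)
        (∑ β, G' t α β * lump c π β) (Set.Ici t) t := hd.hasDerivWithinAt
    have hcongr : HasDerivWithinAt (fun _ : ℝ => lump c π α)
        (∑ β, G' t α β * lump c π β) (Set.Ici t) t := by
      refine hdw.congr (fun s hs => (key s (le_trans ht hs) α).symm) ?_
      exact (key t ht α).symm
    have h1 := hcongr.derivWithin (uniqueDiffOn_Ici t t Set.self_mem_Ici)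
    have h2 := (hasDerivWithinAt_const t (Set.Ici t)
      (lump c π α)).derivWithin (uniqueDiffOn_Ici t t Set.self_mem_Ici)
    have hz : ∑ β, G' t α β * lump c π β = 0 := by rw [← h1, h2]
    simpa [Matrix.mulVec, dotProduct] using hz
  calc (G' t * (G t)⁻¹) *ᵥ lump c π = G' t *ᵥ ((G t)⁻¹ *ᵥ lump c π) := by
        rw [Matrix.mulVec_mulVec]
    _ = 0 := by rw [hGinvfix, hderiv0]
end

section
/- Theorem 2.5 (condition 1, driven case): Let W be an N×N rate matrix and π a probability vector with W π = 0 and (Λπ) α > 0 for all α. Suppose (p⁽ⁱ⁾)_{i ∈ I} is a family of probability vectors on Fin N, each conditionally equilibrated with respect to π, i.e. p⁽ⁱ⁾ x = (Λ p⁽ⁱ⁾)(c x) · π x / (Λπ)(c x), and suppose the lumped marginals {Λ p⁽ⁱ⁾ : i ∈ I} span ℝ^M. If V is an M×M matrix satisfying V (Λ p⁽ⁱ⁾) = Λ (W p⁽ⁱ⁾) for every i ∈ I (i.e. V is an exact time-local generator of the lumped dynamics at this instant, reproducing the coarse-grained time derivatives of all admissible time-evolved states), then V (Λπ) = 0, i.e.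 Λπ is an instantaneous fixed point of the lumped process. -/
open Matrix Finset

/-- **Theorem 2.5 (condition 1, driven case).** Let `W` be a rate matrix with fixed point
`π` (a probability vector with `W π = 0` and `(Λπ) α > 0` for all `α`). Let `(p⁽ⁱ⁾)_{i ∈ I}`
be a family of probability vectors, each conditionally equilibrated with respect to `π`,
whose lumped marginals span `ℝ^M`. If `V` is an `M × M` matrix reproducing the
coarse-grained time derivatives of all these states, `V (Λ p⁽ⁱ⁾) = Λ (W p⁽ⁱ⁾)`,
then `V (Λπ) = 0`: `Λπ` is an instantaneous fixed point of the lumped process. -/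
theorem driven_IFP_of_conditional_equilibrium {N M : ℕ} (c : Fin N → Fin M)
    (W : Matrix (Fin N) (Fin N) ℝ)
    (hWoff : ∀ x y, x ≠ y → 0 ≤ W x y) (hWsum : ∀ y, ∑ x, W x y = 0)
    (π : Fin N → ℝ) (hπ : ∀ x, 0 ≤ π x) (hπsum : ∑ x, π x = 1)
    (hfix : W *ᵥ π = 0) (hΛπpos : ∀ α, 0 < lump c π α)
    {I : Type*} (p : I → Fin N → ℝ)
    (hp : ∀ i, ∀ x, 0 ≤ p i x) (hpsum : ∀ i, ∑ x, p i x = 1)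
    (hcondeq : ∀ i x, p i x = lump c (p i) (c x) * π x / lump c π (c x))
    (hspan : Submodule.span ℝ (Set.range fun i => lump c (p i)) = ⊤)
    (V : Matrix (Fin M) (Fin M) ℝ)
    (hV : ∀ i, V *ᵥ lump c (p i) = lump c (W *ᵥ p i)) :
    V *ᵥ lump c π = 0 := by
  classical
  -- L : lumping matrix, T : conditional-equilibrium lifting matrix
  set L : Matrix (Fin M) (Fin N) ℝ := fun α x => if c x = α then 1 else 0 with hL
  set T : Matrix (Fin N) (Fin M) ℝ :=
    fun x α => if c x = α then π x / lump c π (c x) else 0 with hT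
  have hlump : ∀ q : Fin N → ℝ, lump c q = L *ᵥ q := by
    intro q; funext α
    simp [lump, hL, Matrix.mulVec, dotProduct, ite_mul]
  have hTv : ∀ q : Fin M → ℝ, T *ᵥ q = fun x => q (c x) * π x / lump c π (c x) := by
    intro q; funext x
    simp only [hT, Matrix.mulVec, dotProduct]
    rw [Finset.sum_eq_single (c x)]
    · simp; ring
    · intro b _ hb; simp [Ne.symm hb]
    · simp
  have hTp : ∀ i, T *ᵥ lump c (p i) = p i := by
    intro i; rw [hTv]; funext x; exact (hcondeq i x).symm
  have hTπ : T *ᵥ lump c π = π := by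
    rw [hTv]; funext x
    rw [mul_comm, mul_div_assoc, div_self (hΛπpos (c x)).ne', mul_one]
  have hmaps : V.mulVecLin = (L * W * T).mulVecLin := by
    apply LinearMap.ext_on hspan
    rintro q ⟨i, rfl⟩
    simp only [Matrix.mulVecLin_apply, ← Matrix.mulVec_mulVec]
    rw [hTp, hV, hlump]
  have := congrArg (fun f => f (lump c π)) hmaps
  simpa [Matrix.mulVecLin_apply, ← Matrix.mulVec_mulVec, hTπ, hfix] using this
end

section
/- Theorem 3.1 (integrated second law at the mesolevel dominates the microlevel one): Fix β > 0 and energies E : ℝ → Fin N → ℝ of the bipartite form E t x = Ē t (c x) + Ẽ x with t ↦ Ē t α continuously differentiable. Let W : ℝ → (N×N rate matrices) be continuous and satisfy local detailed balance: for all x ≠ y and all t, W t x y · exp(−β · E t y) = W t y x · exp(−β · E t x); consequently the Gibbs state π t x = exp(−β E t x)/Z t with Z t = ∑_x exp(−β E t x) satisfies W t (π t) = 0. Let p : [0,∞) → (probability vectors on Fin N) solve d/dt p t = W t (p t), with p t strictly positive for every t ≥ 0, and assume the initial state is conditionally equilibrated: p 0 x = (Λ p 0)(c x) · π 0 x / (Λ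 π 0)(c x). Define the work W_wk(t) = ∫₀ᵗ ∑_x (∂_s E s x) · p s x ds, the microscopic nonequilibrium free energy F_mic(t) = ∑_x E t x · p t x + β⁻¹ ∑_x p t x · log(p t x), the mesoscopic free energies F_α(t) = −β⁻¹ log ∑_{x : c x = α} exp(−β E t x) and F(t) = ∑_α (Λ p t) α · (F_α(t) + β⁻¹ log (Λ p t) α). Then for every t ≥ 0: Σ(t) := β·(W_wk(t) − F(t) + F(0)) ≥ Σ_mic(t) := β·(W_wk(t) − F_mic(t) + F_mic(0)) ≥ 0. -/
open Matrix Finset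

/-- The Gibbs state `π x = exp(−β E x) / Z` with `Z = ∑_y exp(−β E y)`. -/
noncomputable def gibbs {N : ℕ} (β : ℝ) (E : Fin N → ℝ) : Fin N → ℝ :=
  fun x => Real.exp (-β * E x) / ∑ y, Real.exp (-β * E y)

/-- The work done on the system up to time `t`:
`W_wk(t) = ∫₀ᵗ ∑_x (∂_s E s x) · p s x ds`. -/
noncomputable def workDone {N : ℕ} (E : ℝ → Fin N → ℝ) (p : ℝ → Fin N → ℝ) (t : ℝ) : ℝ :=
  ∫ s in (0:ℝ)..t, ∑ x, deriv (fun u => E u x) s * p s x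

/-- The microscopic nonequilibrium free energy
`F_mic(t) = ∑_x E t x · p t x + β⁻¹ ∑_x p t x · log (p t x)`. -/
noncomputable def freeMic {N : ℕ} (β : ℝ) (E : ℝ → Fin N → ℝ) (p : ℝ → Fin N → ℝ)
    (t : ℝ) : ℝ :=
  (∑ x, E t x * p t x) + β⁻¹ * ∑ x, p t x * Real.log (p t x)

/-- The mesoscopic nonequilibrium free energy
`F(t) = ∑_α (Λ p t) α · (F_α(t) + β⁻¹ log (Λ p t) α)` with
`F_α(t) = −β⁻¹ log ∑_{x : c x = α} exp(−β E t x)`. -/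
noncomputable def freeMeso {N M : ℕ} (β : ℝ) (E : ℝ → Fin N → ℝ) (c : Fin N → Fin M)
    (p : ℝ → Fin N → ℝ) (t : ℝ) : ℝ :=
  ∑ α, lump c (p t) α *
    ((-β⁻¹ * Real.log (∑ x, if c x = α then Real.exp (-β * E t x) else 0)) +
      β⁻¹ * Real.log (lump c (p t) α))

/-! ### Auxiliary lemmas -/

lemma lump_group {N M : ℕ} (c : Fin N → Fin M) (q : Fin N → ℝ) (f : Fin M → ℝ) :
    ∑ α, f α * lump c q α = ∑ x, f (c x) * q x := by
  unfold lump
  simp_rw [Finset.mul_sum, mul_ite, mul_zero]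
  rw [Finset.sum_comm]
  refine Finset.sum_congr rfl fun x _ => ?_
  simp [Finset.sum_ite_eq]

lemma lump_sum {N M : ℕ} (c : Fin N → Fin M) (q : Fin N → ℝ) :
    ∑ α, lump c q α = ∑ x, q x := by
  have := lump_group c q (fun _ => 1)
  simpa using this

lemma fiber_pos {N M : ℕ} (c : Fin N → Fin M) (f : Fin N → ℝ) (hf : ∀ y, 0 < f y) (x : Fin N) :
    0 < ∑ y, if c y = c x then f y else 0 := by
  refine Finset.sum_pos' (fun y _ => ?_) ⟨x, Finset.mem_univ x, by simp [hf x]⟩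
  split <;> simp [(hf _).le]

lemma lump_pos {N M : ℕ} (c : Fin N → Fin M) (q : Fin N → ℝ) (hq : ∀ y, 0 < q y) (x : Fin N) :
    0 < lump c q (c x) := fiber_pos c q hq x

lemma mic_sub_meso {N M : ℕ} (c : Fin N → Fin M) {β : ℝ} (hβ : 0 < β) (Ef : Fin N → ℝ)
    (q : Fin N → ℝ) (hq : ∀ x, 0 < q x) :
    ((∑ x, Ef x * q x) + β⁻¹ * ∑ x, q x * Real.log (q x))
      - (∑ α, lump c q α *
          ((-β⁻¹ * Real.log (∑ x, if c x = α then Real.exp (-β * Ef x) else 0)) +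
            β⁻¹ * Real.log (lump c q α)))
    = β⁻¹ * ∑ x, q x * (Real.log (q x) -
        Real.log (lump c q (c x) * Real.exp (-β * Ef x) /
          (∑ y, if c y = c x then Real.exp (-β * Ef y) else 0))) := by
  set Z : Fin M → ℝ := fun α => ∑ x, if c x = α then Real.exp (-β * Ef x) else 0 with hZ
  have hZpos : ∀ x, 0 < Z (c x) := fun x => fiber_pos c _ (fun y => Real.exp_pos _) x
  have hPpos : ∀ x, 0 < lump c q (c x) := lump_pos c q hq
  have hmeso : (∑ α, lump c q α *
      ((-β⁻¹ * Real.log (Z α)) + β⁻¹ * Real.log (lump c q α)))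
      = β⁻¹ * ∑ x, (Real.log (lump c q (c x)) - Real.log (Z (c x))) * q x := by
    rw [← lump_group c q (fun α => Real.log (lump c q α) - Real.log (Z α)), Finset.mul_sum]
    refine Finset.sum_congr rfl fun α _ => ?_; ring
  rw [hmeso]
  have hlogr : ∀ x, Real.log (lump c q (c x) * Real.exp (-β * Ef x) / Z (c x))
      = Real.log (lump c q (c x)) + (-β * Ef x) - Real.log (Z (c x)) := by
    intro x
    rw [Real.log_div (mul_pos (hPpos x) (Real.exp_pos _)).ne' (hZpos x).ne',
      Real.log_mul (hPpos x).ne' (Real.exp_ne_zero _), Real.log_exp]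
  have hR : ∑ x, q x * (Real.log (q x) -
        Real.log (lump c q (c x) * Real.exp (-β * Ef x) / Z (c x)))
      = (∑ x, (q x * Real.log (q x)
          - (Real.log (lump c q (c x)) - Real.log (Z (c x))) * q x))
        + β * ∑ x, Ef x * q x := by
    rw [Finset.mul_sum, ← Finset.sum_add_distrib]
    refine Finset.sum_congr rfl fun x _ => ?_
    rw [hlogr x]; ring
  rw [hR]
  rw [Finset.sum_sub_distrib]
  field_simp
  ring

lemma relent_nonneg {N M : ℕ} (c : Fin N → Fin M) {β : ℝ} (Ef : Fin N → ℝ)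
    (q : Fin N → ℝ) (hq : ∀ x, 0 < q x) :
    0 ≤ ∑ x, q x * (Real.log (q x) -
        Real.log (lump c q (c x) * Real.exp (-β * Ef x) /
          (∑ y, if c y = c x then Real.exp (-β * Ef y) else 0))) := by
  set Z : Fin M → ℝ := fun α => ∑ x, if c x = α then Real.exp (-β * Ef x) else 0 with hZdef
  set r : Fin N → ℝ := fun x => lump c q (c x) * Real.exp (-β * Ef x) / Z (c x) with hrdef
  have hZpos : ∀ x, 0 < Z (c x) := fun x => fiber_pos c _ (fun y => Real.exp_pos _) x
  have hrpos : ∀ x, 0 < r x := fun x =>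
    div_pos (mul_pos (lump_pos c q hq x) (Real.exp_pos _)) (hZpos x)
  have hsum_r : ∑ x, r x = ∑ x, q x := by
    have h1 : ∑ x, r x = ∑ α, (lump c q α / Z α) * lump c (fun y => Real.exp (-β * Ef y)) α := by
      rw [lump_group c (fun y => Real.exp (-β * Ef y)) (fun α => lump c q α / Z α)]
      refine Finset.sum_congr rfl fun x _ => ?_
      rw [hrdef]; ring
    rw [h1, ← lump_sum c q]
    refine Finset.sum_congr rfl fun α _ => ?_
    have hZα : lump c (fun y => Real.exp (-β * Ef y)) α = Z α := rfl
    rw [hZα]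
    by_cases hz : Z α = 0
    · have hP : lump c q α = 0 := by
        rw [hZdef] at hz
        simp only at hz
        have hall := (Finset.sum_eq_zero_iff_of_nonneg
          (fun y _ => by split <;> simp [Real.exp_pos, le_refl, (Real.exp_pos _).le])).mp hz
        unfold lump
        refine Finset.sum_eq_zero fun y _ => ?_
        have := hall y (Finset.mem_univ y)
        split
        · next h => exfalso; revert this; simp [h, Real.exp_ne_zero]
        · rfl
      simp [hz, hP]
    · field_simp
  have key : ∀ x, q x - r x ≤ q x * (Real.log (q x) - Real.log (r x)) := by
    intro x
    have hl : Real.log (r x / q x) ≤ r x / q x - 1 :=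
      Real.log_le_sub_one_of_pos (div_pos (hrpos x) (hq x))
    rw [Real.log_div (hrpos x).ne' (hq x).ne'] at hl
    have h2 : q x * (Real.log (r x) - Real.log (q x)) ≤ q x * (r x / q x - 1) :=
      mul_le_mul_of_nonneg_left hl (hq x).le
    have h3 : q x * (r x / q x - 1) = r x - q x := by field_simp [(hq x).ne']
    nlinarith
  calc (0:ℝ) = ∑ x, (q x - r x) := by rw [Finset.sum_sub_distrib, hsum_r]; ring
  _ ≤ _ := Finset.sum_le_sum fun x _ => key x

lemma mulVec_sum_zero {N : ℕ} (Wm : Matrix (Fin N) (Fin N) ℝ)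
    (hWsum : ∀ y, ∑ x, Wm x y = 0) (q : Fin N → ℝ) :
    ∑ x, (Wm *ᵥ q) x = 0 := by
  simp only [Matrix.mulVec, dotProduct]
  rw [Finset.sum_comm]
  refine Finset.sum_eq_zero fun y _ => ?_
  rw [← Finset.sum_mul, hWsum y, zero_mul]

lemma dissipation_nonpos {N : ℕ} {β : ℝ} (Ef : Fin N → ℝ)
    (q : Fin N → ℝ) (hq : ∀ x, 0 < q x)
    (Wm : Matrix (Fin N) (Fin N) ℝ)
    (hWoff : ∀ x y, x ≠ y → 0 ≤ Wm x y)
    (hWsum : ∀ y, ∑ x, Wm x y = 0)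
    (hdb : ∀ x y, x ≠ y → Wm x y * Real.exp (-β * Ef y) = Wm y x * Real.exp (-β * Ef x)) :
    ∑ x, (Wm *ᵥ q) x * (β * Ef x + Real.log (q x)) ≤ 0 := by
  set a : Fin N → ℝ := fun x => q x * Real.exp (β * Ef x) with ha
  have hapos : ∀ x, 0 < a x := fun x => mul_pos (hq x) (Real.exp_pos _)
  have hloga : ∀ x, β * Ef x + Real.log (q x) = Real.log (a x) := by
    intro x
    rw [ha]; simp only
    rw [Real.log_mul (hq x).ne' (Real.exp_ne_zero _), Real.log_exp]; ring
  set t : Fin N → Fin N → ℝ := fun x y =>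
    if x = y then 0 else Wm x y * q y * (Real.log (a x) - Real.log (a y)) with ht
  have hS : ∑ x, (Wm *ᵥ q) x * (β * Ef x + Real.log (q x)) = ∑ x, ∑ y, t x y := by
    have h1 : ∀ x, (Wm *ᵥ q) x * (β * Ef x + Real.log (q x))
        = ∑ y, (t x y + Wm x y * q y * Real.log (a y)) := by
      intro x
      rw [hloga x]
      simp only [Matrix.mulVec, dotProduct, Finset.sum_mul]
      refine Finset.sum_congr rfl fun y _ => ?_
      rw [ht]; simp only
      split
      · next h => subst h; ring
      · ring
    simp_rw [h1]
    have h2 : ∑ x, ∑ y, Wm x y * q y * Real.log (a y) = 0 := by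
      rw [Finset.sum_comm]
      refine Finset.sum_eq_zero fun y _ => ?_
      have : ∑ x, Wm x y * q y * Real.log (a y) = (∑ x, Wm x y) * (q y * Real.log (a y)) := by
        rw [Finset.sum_mul]; refine Finset.sum_congr rfl fun x _ => by ring
      rw [this, hWsum y, zero_mul]
    simp only [Finset.sum_add_distrib]
    rw [h2, add_zero]
  rw [hS]
  have hpair : ∀ x y, t x y + t y x ≤ 0 := by
    intro x y
    rcases eq_or_ne x y with rfl | hxy
    · simp [ht]
    · have hk : 0 ≤ Wm x y * Real.exp (-β * Ef y) :=
        mul_nonneg (hWoff x y hxy) (Real.exp_pos _).le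
      have hexp : ∀ z : Fin N, Real.exp (-β * Ef z) * Real.exp (β * Ef z) = 1 := by
        intro z; rw [← Real.exp_add]; ring_nf; exact Real.exp_zero
      have hqy : Wm x y * q y = (Wm x y * Real.exp (-β * Ef y)) * a y := by
        rw [ha]; simp only
        linear_combination (-(Wm x y * q y)) * (hexp y)
      have hqx : Wm y x * q x = (Wm x y * Real.exp (-β * Ef y)) * a x := by
        rw [hdb x y hxy, ha]; simp only
        linear_combination (-(Wm y x * q x)) * (hexp x)
      rw [ht]; simp only [if_neg hxy, if_neg hxy.symm]
      rw [hqy, hqx]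
      set k := Wm x y * Real.exp (-β * Ef y)
      have : k * a y * (Real.log (a x) - Real.log (a y))
          + k * a x * (Real.log (a y) - Real.log (a x))
          = k * ((a y - a x) * (Real.log (a x) - Real.log (a y))) := by ring
      rw [this]
      rcases le_total (a x) (a y) with h | h
      · have hl : Real.log (a x) ≤ Real.log (a y) := Real.log_le_log (hapos x) h
        exact mul_nonpos_of_nonneg_of_nonpos hk
          (mul_nonpos_of_nonneg_of_nonpos (by linarith) (by linarith))
      · have hl : Real.log (a y) ≤ Real.log (a x) := Real.log_le_log (hapos y) h
        exact mul_nonpos_of_nonneg_of_nonpos hk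
          (mul_nonpos_of_nonpos_of_nonneg (by linarith) (by linarith))
  have hdouble : (∑ x, ∑ y, t x y) + (∑ x, ∑ y, t x y) ≤ 0 := by
    nth_rewrite 2 [Finset.sum_comm]
    rw [← Finset.sum_add_distrib]
    simp_rw [← Finset.sum_add_distrib]
    exact Finset.sum_nonpos fun x _ => Finset.sum_nonpos fun y _ => hpair x y
  linarith

lemma micro_second_law {N : ℕ} {β : ℝ} (hβ : 0 < β)
    (E : ℝ → Fin N → ℝ) (hEc : ∀ x, ContDiff ℝ 1 fun t => E t x)
    (W : ℝ → Matrix (Fin N) (Fin N) ℝ)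
    (hWoff : ∀ t x y, x ≠ y → 0 ≤ W t x y)
    (hWsum : ∀ t y, ∑ x, W t x y = 0)
    (hdb : ∀ t x y, x ≠ y →
      W t x y * Real.exp (-β * E t y) = W t y x * Real.exp (-β * E t x))
    (p : ℝ → Fin N → ℝ)
    (hODE : ∀ x, ∀ t ∈ Set.Ici (0:ℝ),
      HasDerivWithinAt (fun s => p s x) ((W t *ᵥ p t) x) (Set.Ici 0) t)
    (hppos : ∀ t ∈ Set.Ici (0:ℝ), ∀ x, 0 < p t x) :
    ∀ t ∈ Set.Ici (0:ℝ), 0 ≤ workDone E p t - freeMic β E p t + freeMic β E p 0 := by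
  intro t ht
  rcases eq_or_lt_of_le (Set.mem_Ici.mp ht) with h0 | h0
  · rw [← h0]
    simp [workDone, intervalIntegral.integral_same]
  set h : ℝ → ℝ := fun s => ∑ x, deriv (fun u => E u x) s * p s x with hh
  have hpc : ∀ x, ContinuousOn (fun s => p s x) (Set.Ici 0) :=
    fun x u hu => (hODE x u hu).continuousWithinAt
  have hE'c : ∀ x, Continuous (deriv (fun u => E u x)) :=
    fun x => (hEc x).continuous_deriv le_rfl
  have hhc : ContinuousOn h (Set.Ici 0) := by
    apply continuousOn_finset_sum
    intro x _
    exact ((hE'c x).continuousOn).mul (hpc x)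
  have hWDeq : workDone E p = fun b => ∫ s in (0:ℝ)..b, h s := rfl
  have hWDc : ContinuousOn (workDone E p) (Set.Icc 0 t) := by
    rw [hWDeq]
    have hint : MeasureTheory.IntegrableOn h (Set.uIcc 0 t) := by
      rw [Set.uIcc_of_le h0.le]
      exact (hhc.mono Set.Icc_subset_Ici_self).integrableOn_Icc
    have := intervalIntegral.continuousOn_primitive_interval hint
    rwa [Set.uIcc_of_le h0.le] at this
  have hFc : ContinuousOn (freeMic β E p) (Set.Ici 0) := by
    unfold freeMic
    apply ContinuousOn.add
    · apply continuousOn_finset_sum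
      intro x _
      exact ((hEc x).continuous.continuousOn).mul (hpc x)
    · apply ContinuousOn.mul continuousOn_const
      apply continuousOn_finset_sum
      intro x _
      exact (hpc x).mul ((hpc x).log (fun u hu => (hppos u hu x).ne'))
  set g : ℝ → ℝ := fun u => workDone E p u - freeMic β E p u with hg
  set g' : ℝ → ℝ := fun u =>
    h u - ((∑ x, (deriv (fun v => E v x) u * p u x + E u x * (W u *ᵥ p u) x))
      + β⁻¹ * ∑ x, ((W u *ᵥ p u) x * Real.log (p u x) + (W u *ᵥ p u) x)) with hg'
  have hgc : ContinuousOn g (Set.Icc 0 t) :=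
    hWDc.sub (hFc.mono Set.Icc_subset_Ici_self)
  have hderiv : ∀ u ∈ interior (Set.Icc (0:ℝ) t), HasDerivAt g (g' u) u := by
    intro u hu
    rw [interior_Icc] at hu
    have hu0 : 0 < u := hu.1
    have hmem : Set.Ici (0:ℝ) ∈ nhds u := Ici_mem_nhds hu0
    have hpd : ∀ x, HasDerivAt (fun s => p s x) ((W u *ᵥ p u) x) u :=
      fun x => (hODE x u hu0.le).hasDerivAt hmem
    have hWD : HasDerivAt (workDone E p) (h u) u := by
      rw [hWDeq]
      apply intervalIntegral.integral_hasDerivAt_right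
      · refine (hhc.mono ?_).intervalIntegrable
        rw [Set.uIcc_of_le hu0.le]
        exact Set.Icc_subset_Ici_self
      · exact ContinuousOn.stronglyMeasurableAtFilter isOpen_Ioi
          (hhc.mono Set.Ioi_subset_Ici_self) u hu0
      · exact hhc.continuousAt hmem
    have hF : HasDerivAt (freeMic β E p)
        ((∑ x, (deriv (fun v => E v x) u * p u x + E u x * (W u *ᵥ p u) x))
          + β⁻¹ * ∑ x, ((W u *ᵥ p u) x * Real.log (p u x) + (W u *ᵥ p u) x)) u := by
      unfold freeMic
      apply HasDerivAt.add
      · apply HasDerivAt.fun_sum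
        intro x _
        exact (((hEc x).differentiable one_ne_zero).differentiableAt.hasDerivAt).mul (hpd x)
      · apply HasDerivAt.const_mul
        apply HasDerivAt.fun_sum
        intro x _
        have hlog : HasDerivAt (fun s => Real.log (p s x))
            ((W u *ᵥ p u) x / p u x) u := (hpd x).log (hppos u hu0.le x).ne'
        have := (hpd x).fun_mul hlog
        rw [mul_div_cancel₀ _ (hppos u hu0.le x).ne'] at this
        exact this
    exact hWD.sub hF
  have hnonneg : ∀ u ∈ interior (Set.Icc (0:ℝ) t), 0 ≤ g' u := by
    intro u hu
    rw [interior_Icc] at hu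
    have hu0 : (0:ℝ) ≤ u := hu.1.le
    set d : Fin N → ℝ := fun x => (W u *ᵥ p u) x with hd
    have hS : ∑ x, d x * (β * E u x + Real.log (p u x)) ≤ 0 :=
      dissipation_nonpos (E u) (p u) (hppos u hu0) (W u)
        (fun x y => hWoff u x y) (hWsum u) (fun x y => hdb u x y)
    have hD : ∑ x, d x = 0 := mulVec_sum_zero (W u) (hWsum u) (p u)
    have hsplit : ∑ x, d x * (β * E u x + Real.log (p u x))
        = β * (∑ x, E u x * d x) + ∑ x, d x * Real.log (p u x) := by
      rw [Finset.mul_sum, ← Finset.sum_add_distrib]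
      exact Finset.sum_congr rfl fun x _ => by ring
    have hA : (∑ x, (deriv (fun v => E v x) u * p u x + E u x * d x))
        = h u + ∑ x, E u x * d x := by
      rw [hh]; simp only [Finset.sum_add_distrib]
    have hB : (∑ x, (d x * Real.log (p u x) + d x))
        = (∑ x, d x * Real.log (p u x)) + ∑ x, d x := Finset.sum_add_distrib
    have : g' u = -β⁻¹ * (∑ x, d x * (β * E u x + Real.log (p u x)) + ∑ x, d x) := by
      rw [hg']; simp only
      rw [hA, hB, hsplit, hD]
      field_simp
      ring
    rw [this, hD, add_zero]
    have h1 : 0 ≤ β⁻¹ * (-(∑ x, d x * (β * E u x + Real.log (p u x)))) :=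
      mul_nonneg (inv_pos.mpr hβ).le (neg_nonneg.mpr hS)
    nlinarith [h1]
  have hmono : MonotoneOn g (Set.Icc 0 t) :=
    monotoneOn_of_hasDerivWithinAt_nonneg (convex_Icc 0 t) hgc
      (fun u hu => (hderiv u hu).hasDerivWithinAt) hnonneg
  have h01 : (0:ℝ) ∈ Set.Icc (0:ℝ) t := ⟨le_refl _, h0.le⟩
  have ht1 : t ∈ Set.Icc (0:ℝ) t := ⟨h0.le, le_refl _⟩
  have := hmono h01 ht1 h0.le
  have hWD0 : workDone E p 0 = 0 := by simp [workDone]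
  rw [hg] at this
  simp only at this
  rw [hWD0] at this
  linarith

/-- **Theorem 3.1 (integrated second law at the mesolevel dominates the microlevel one).**
For bipartite energies `E t x = Ē t (c x) + Ẽ x` with continuously differentiable driving,
a continuous family of rate matrices `W t` obeying local detailed balance, and a strictly
positive solution `p` of the master equation started in a conditionally equilibrated state,
the mesoscopic entropy production `Σ(t) = β (W_wk(t) − ΔF(t))` dominates the microscopic
one `Σ_mic(t) = β (W_wk(t) − ΔF_mic(t))`, and both are nonnegative, for all `t ≥ 0`. -/
theorem integrated_second_law_mesolevel {N M : ℕ} (c : Fin N → Fin M)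
    (β : ℝ) (hβ : 0 < β)
    (E : ℝ → Fin N → ℝ) (Ebar : ℝ → Fin M → ℝ) (Etil : Fin N → ℝ)
    (hE : ∀ t x, E t x = Ebar t (c x) + Etil x)
    (hEbar : ∀ α, ContDiff ℝ 1 fun t => Ebar t α)
    (W : ℝ → Matrix (Fin N) (Fin N) ℝ)
    (hWcont : ∀ x y, Continuous fun t => W t x y)
    (hWoff : ∀ t x y, x ≠ y → 0 ≤ W t x y)
    (hWsum : ∀ t y, ∑ x, W t x y = 0)
    (hdb : ∀ t x y, x ≠ y →
      W t x y * Real.exp (-β * E t y) = W t y x * Real.exp (-β * E t x))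
    (p : ℝ → Fin N → ℝ)
    (hODE : ∀ x, ∀ t ∈ Set.Ici (0:ℝ),
      HasDerivWithinAt (fun s => p s x) ((W t *ᵥ p t) x) (Set.Ici 0) t)
    (hppos : ∀ t ∈ Set.Ici (0:ℝ), ∀ x, 0 < p t x)
    (hpsum : ∀ t ∈ Set.Ici (0:ℝ), ∑ x, p t x = 1)
    (hinit : ∀ x, p 0 x =
      lump c (p 0) (c x) * gibbs β (E 0) x / lump c (gibbs β (E 0)) (c x)) :
    ∀ t ∈ Set.Ici (0:ℝ),
      β * (workDone E p t - freeMeso β E c p t + freeMeso β E c p 0) ≥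
        β * (workDone E p t - freeMic β E p t + freeMic β E p 0) ∧
      β * (workDone E p t - freeMic β E p t + freeMic β E p 0) ≥ 0 := by
  intro t ht
  have hEc : ∀ x, ContDiff ℝ 1 fun u => E u x := by
    intro x
    have hfx : (fun u => E u x) = fun u => Ebar u (c x) + Etil x := funext fun u => hE u x
    rw [hfx]
    exact (hEbar (c x)).add contDiff_const
  have hmic := micro_second_law hβ E hEc W hWoff hWsum hdb p hODE hppos t ht
  have hdiff : ∀ s ∈ Set.Ici (0:ℝ), freeMic β E p s - freeMeso β E c p s
      = β⁻¹ * ∑ x, p s x * (Real.log (p s x) -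
          Real.log (lump c (p s) (c x) * Real.exp (-β * E s x) /
            (∑ y, if c y = c x then Real.exp (-β * E s y) else 0))) := by
    intro s hs
    unfold freeMic freeMeso
    exact mic_sub_meso c hβ (E s) (p s) (hppos s hs)
  have hle : freeMeso β E c p t ≤ freeMic β E p t := by
    have h1 := hdiff t ht
    have h2 := relent_nonneg c (β := β) (E t) (p t) (hppos t ht)
    have h3 : 0 ≤ β⁻¹ * ∑ x, p t x * (Real.log (p t x) -
          Real.log (lump c (p t) (c x) * Real.exp (-β * E t x) /
            (∑ y, if c y = c x then Real.exp (-β * E t y) else 0))) :=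
      mul_nonneg (inv_pos.mpr hβ).le h2
    linarith
  have heq0 : freeMic β E p 0 = freeMeso β E c p 0 := by
    have h1 := hdiff 0 Set.self_mem_Ici
    have hzero : ∀ x, p 0 x * (Real.log (p 0 x) -
        Real.log (lump c (p 0) (c x) * Real.exp (-β * E 0 x) /
          (∑ y, if c y = c x then Real.exp (-β * E 0 y) else 0))) = 0 := by
      intro x
      have hNe : Nonempty (Fin N) := ⟨x⟩
      have hZt : (0:ℝ) < ∑ y, Real.exp (-β * E 0 y) :=
        Finset.sum_pos (fun y _ => Real.exp_pos _) Finset.univ_nonempty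
      have hZ : (0:ℝ) < ∑ y, if c y = c x then Real.exp (-β * E 0 y) else 0 :=
        fiber_pos c _ (fun y => Real.exp_pos _) x
      have hlg : lump c (gibbs β (E 0)) (c x)
          = (∑ y, if c y = c x then Real.exp (-β * E 0 y) else 0)
            / (∑ y, Real.exp (-β * E 0 y)) := by
        unfold lump gibbs
        rw [Finset.sum_div]
        refine Finset.sum_congr rfl fun y _ => ?_
        split <;> simp
      have hqr : p 0 x = lump c (p 0) (c x) * Real.exp (-β * E 0 x) /
          (∑ y, if c y = c x then Real.exp (-β * E 0 y) else 0) := by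
        rw [hinit x, hlg]
        unfold gibbs
        field_simp
      rw [← hqr]
      simp
    rw [Finset.sum_eq_zero (fun x _ => hzero x), mul_zero] at h1
    linarith
  constructor
  · have hineq : workDone E p t - freeMic β E p t + freeMic β E p 0
        ≤ workDone E p t - freeMeso β E c p t + freeMeso β E c p 0 := by linarith
    exact mul_le_mul_of_nonneg_left hineq hβ.le
  · exact mul_nonneg hβ.le hmic
end

section
/- Undriven second law at the mesolevel (combination of Theorems 2.2 and 2.4; case 1 of Theorems 3.2 and 4.1): Let (T_t)_{t ≥ 0} be column-stochastic N×N matrices with T_t π = π for all t, where π is a strictly positive probability vector, and let G_t α β = ∑_{x : c x = α} ∑_{y : c y = β} T_t x y · π y / (Λπ) β be the lumped propagator for conditionally equilibrated initial states. Assume Λπ is strictly positive, each G_t is invertible, and the lumped dynamics is 1-Markovian on an interval I ⊆ [0,∞): for all s ≤ t in I the matrix G_t · G_s⁻¹ has nonnegative entries. Then for every mesostate probability vector q and all s ≤ t in I with G_s q and G_t q strictly positive, D[G_t q ‖ Λπ] ≤ D[G_s q ‖ Λπ]; i.e. t ↦ D[Λp(t)‖Λπ] is antitone on I, so the entropy production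 rate Σ̇(t) = −(d/dt) D[Λp(t)‖Λπ] is nonnegative wherever it exists. -/
open Matrix Finset

/-- Relative entropy `D[p‖q] = ∑_x p x · log (p x / q x)`, with the convention that
terms with `p x = 0` contribute `0`. -/
noncomputable def relEnt {K : ℕ} (p q : Fin K → ℝ) : ℝ :=
  ∑ x, if p x = 0 then 0 else p x * Real.log (p x / q x)

/-- Data processing inequality for column-stochastic `R` fixing `w`. -/
lemma dpi {K : ℕ} (R : Matrix (Fin K) (Fin K) ℝ) (hR : ∀ α β, 0 ≤ R α β)
    (hcol : ∀ β, ∑ α, R α β = 1) (w p : Fin K → ℝ) (hw : ∀ α, 0 < w α)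
    (hfix : R *ᵥ w = w) (hp : ∀ α, 0 < p α) (hRp : ∀ α, 0 < (R *ᵥ p) α) :
    relEnt (R *ᵥ p) w ≤ relEnt p w := by
  have hwne : ∀ α, w α ≠ 0 := fun α => (hw α).ne'
  have hcancel : ∀ β, w β * (p β / w β) = p β := fun β => by
    rw [mul_comm, div_mul_cancel₀ _ (hwne β)]
  have key : ∀ α, (R *ᵥ p) α * Real.log ((R *ᵥ p) α / w α)
      ≤ ∑ β, R α β * (p β * Real.log (p β / w β)) := by
    intro α
    have hfixα : ∑ β, R α β * w β = w α := by
      have := congrFun hfix α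
      simpa [Matrix.mulVec, dotProduct] using this
    set u : Fin K → ℝ := fun β => R α β * w β / w α with hu
    have hu0 : ∀ β ∈ Finset.univ, (0:ℝ) ≤ u β := fun β _ =>
      div_nonneg (mul_nonneg (hR α β) (hw β).le) (hw α).le
    have hu1 : ∑ β, u β = 1 := by
      rw [← Finset.sum_div, hfixα, div_self (hwne α)]
    have hmem : ∀ β ∈ Finset.univ, p β / w β ∈ Set.Ici (0:ℝ) := fun β _ =>
      le_of_lt (div_pos (hp β) (hw β))
    have jensen := Real.convexOn_mul_log.map_sum_le hu0 hu1 hmem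
    have hsum1 : ∑ β, u β • (p β / w β) = (R *ᵥ p) α / w α := by
      have h1 : (R *ᵥ p) α / w α = ∑ β, R α β * p β / w α := by
        simp [Matrix.mulVec, dotProduct, Finset.sum_div]
      rw [h1]
      refine Finset.sum_congr rfl fun β _ => ?_
      simp only [hu, smul_eq_mul]
      calc R α β * w β / w α * (p β / w β)
          = R α β * (w β * (p β / w β)) / w α := by ring
        _ = R α β * p β / w α := by rw [hcancel β]
    rw [hsum1] at jensen
    have hsum2 : ∑ β, u β • ((p β / w β) * Real.log (p β / w β))
        = (∑ β, R α β * (p β * Real.log (p β / w β))) / w α := by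
      rw [Finset.sum_div]
      refine Finset.sum_congr rfl fun β _ => ?_
      simp only [hu, smul_eq_mul]
      calc R α β * w β / w α * (p β / w β * Real.log (p β / w β))
          = R α β * (w β * (p β / w β) * Real.log (p β / w β)) / w α := by ring
        _ = R α β * (p β * Real.log (p β / w β)) / w α := by rw [hcancel β]
    rw [hsum2] at jensen
    have := mul_le_mul_of_nonneg_left jensen (hw α).le
    calc (R *ᵥ p) α * Real.log ((R *ᵥ p) α / w α)
        = w α * ((R *ᵥ p) α / w α * Real.log ((R *ᵥ p) α / w α)) := by
          rw [← mul_assoc, mul_comm (w α), div_mul_cancel₀ _ (hwne α)]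
      _ ≤ w α * ((∑ β, R α β * (p β * Real.log (p β / w β))) / w α) := this
      _ = ∑ β, R α β * (p β * Real.log (p β / w β)) := by
          rw [mul_comm, div_mul_cancel₀ _ (hwne α)]
  calc relEnt (R *ᵥ p) w = ∑ α, (R *ᵥ p) α * Real.log ((R *ᵥ p) α / w α) := by
        unfold relEnt
        exact Finset.sum_congr rfl fun α _ => by rw [if_neg (hRp α).ne']
    _ ≤ ∑ α, ∑ β, R α β * (p β * Real.log (p β / w β)) :=
        Finset.sum_le_sum fun α _ => key α
    _ = ∑ β, (∑ α, R α β) * (p β * Real.log (p β / w β)) := by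
        rw [Finset.sum_comm]
        exact Finset.sum_congr rfl fun β _ => by rw [Finset.sum_mul]
    _ = relEnt p w := by
        unfold relEnt
        refine Finset.sum_congr rfl fun β _ => ?_
        rw [hcol β, one_mul, if_neg (hp β).ne']
/-- **Undriven second law at the mesolevel** (combination of Theorems 2.2 and 2.4; case 1
of Theorems 3.2 and 4.1). For an undriven microscopic process `T_t` with strictly positive
steady state `π`, let `G_t` be the lumped propagator for conditionally equilibrated initial
states. If each `G_t` is invertible and the lumped dynamics is 1-Markovian on `I`
(the intermediate-time transition matrices `G_t G_s⁻¹` have nonnegative entries), then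
`t ↦ D[G_t q ‖ Λπ]` is antitone on `I` for every mesostate probability vector `q`, so the
entropy production rate `Σ̇(t) = −(d/dt) D[Λp(t)‖Λπ]` is nonnegative wherever it exists. -/
theorem undriven_second_law_mesolevel {N M : ℕ} (c : Fin N → Fin M)
    (T : ℝ → Matrix (Fin N) (Fin N) ℝ)
    (π : Fin N → ℝ) (hπpos : ∀ x, 0 < π x) (hπsum : ∑ x, π x = 1)
    (hTnonneg : ∀ t, 0 ≤ t → ∀ x y, 0 ≤ T t x y)
    (hTsum : ∀ t, 0 ≤ t → ∀ y, ∑ x, T t x y = 1)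
    (hTfix : ∀ t, 0 ≤ t → T t *ᵥ π = π)
    (G : ℝ → Matrix (Fin M) (Fin M) ℝ)
    (hG : ∀ t α β,
      G t α β = ∑ x, ∑ y, if c x = α ∧ c y = β then T t x y * π y / lump c π β else 0)
    (hΛπpos : ∀ α, 0 < lump c π α)
    (hGinv : ∀ t, 0 ≤ t → IsUnit (G t))
    (I : Set ℝ) (hI : I ⊆ Set.Ici (0:ℝ))
    (hMarkov : ∀ s ∈ I, ∀ t ∈ I, s ≤ t → ∀ α β, 0 ≤ (G t * (G s)⁻¹) α β) :
    ∀ q : Fin M → ℝ, (∀ α, 0 ≤ q α) → (∑ α, q α = 1) →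
      ∀ s ∈ I, ∀ t ∈ I, s ≤ t →
        (∀ α, 0 < (G s *ᵥ q) α) → (∀ α, 0 < (G t *ᵥ q) α) →
        relEnt (G t *ᵥ q) (lump c π) ≤ relEnt (G s *ᵥ q) (lump c π) := by
  intro q hq hq1 s hs t ht hst hGsq hGtq
  have hs0 : (0:ℝ) ≤ s := hI hs
  have ht0 : (0:ℝ) ≤ t := hI ht
  set L : Fin M → ℝ := lump c π with hL
  -- columns of G u sum to 1
  have hGcol : ∀ u, 0 ≤ u → ∀ β, ∑ α, G u α β = 1 := by
    intro u hu β
    simp only [hG]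
    rw [Finset.sum_comm]
    have h1 : ∀ x, ∑ α, ∑ y, (if c x = α ∧ c y = β then T u x y * π y / L β else 0)
        = ∑ y, if c y = β then T u x y * π y / L β else 0 := by
      intro x
      rw [Finset.sum_comm]
      refine Finset.sum_congr rfl fun y _ => ?_
      simp [ite_and]
    rw [Finset.sum_congr rfl fun x _ => h1 x, Finset.sum_comm]
    have h2 : ∀ y, ∑ x, (if c y = β then T u x y * π y / L β else 0)
        = if c y = β then π y / L β else 0 := by
      intro y
      by_cases h : c y = β
      · simp only [h, if_true]
        rw [← Finset.sum_div, ← Finset.sum_mul, hTsum u hu y, one_mul]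
      · simp [h]
    rw [Finset.sum_congr rfl fun y _ => h2 y]
    have h3 : (∑ y, if c y = β then π y / L β else 0)
        = (∑ y, if c y = β then π y else 0) / L β := by
      rw [Finset.sum_div]
      refine Finset.sum_congr rfl fun y _ => ?_
      split <;> simp
    rw [h3]
    have h4 : (∑ y, if c y = β then π y else 0) = L β := rfl
    rw [h4, div_self (hΛπpos β).ne']
  -- G u fixes L
  have hGfix : ∀ u, 0 ≤ u → G u *ᵥ L = L := by
    intro u hu
    funext α
    simp only [Matrix.mulVec, dotProduct, hG]
    have h1 : ∀ β, (∑ x, ∑ y, if c x = α ∧ c y = β then T u x y * π y / L β else 0) * L β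
        = ∑ x, ∑ y, if c x = α ∧ c y = β then T u x y * π y else 0 := by
      intro β
      rw [Finset.sum_mul]
      refine Finset.sum_congr rfl fun x _ => ?_
      rw [Finset.sum_mul]
      refine Finset.sum_congr rfl fun y _ => ?_
      split
      · rw [div_mul_cancel₀ _ (hΛπpos β).ne']
      · simp
    rw [Finset.sum_congr rfl fun β _ => h1 β, Finset.sum_comm]
    have h2 : ∀ x, ∑ β, ∑ y, (if c x = α ∧ c y = β then T u x y * π y else 0)
        = if c x = α then π x else 0 := by
      intro x
      rw [Finset.sum_comm]
      have h2a : ∀ y, ∑ β, (if c x = α ∧ c y = β then T u x y * π y else 0)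
          = if c x = α then T u x y * π y else 0 := by
        intro y
        simp [ite_and]
      rw [Finset.sum_congr rfl fun y _ => h2a y]
      by_cases h : c x = α
      · simp only [h, if_true]
        have := congrFun (hTfix u hu) x
        simpa [Matrix.mulVec, dotProduct] using this
      · simp [h]
    rw [Finset.sum_congr rfl fun x _ => h2 x]
    rfl
  set A : Matrix (Fin M) (Fin M) ℝ := G s with hA
  set B : Matrix (Fin M) (Fin M) ℝ := G t with hB
  have hdetA : IsUnit A.det := (Matrix.isUnit_iff_isUnit_det A).mp (hGinv s hs0)
  have hAinvA : A⁻¹ * A = 1 := Matrix.nonsing_inv_mul A hdetA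
  have hAAinv : A * A⁻¹ = 1 := Matrix.mul_nonsing_inv A hdetA
  have hAinvcol : ∀ β, ∑ γ, A⁻¹ γ β = 1 := by
    intro β
    calc ∑ γ, A⁻¹ γ β = ∑ γ, (∑ α, A α γ) * A⁻¹ γ β := by
          refine Finset.sum_congr rfl fun γ _ => ?_
          rw [hGcol s hs0 γ, one_mul]
      _ = ∑ γ, ∑ α, A α γ * A⁻¹ γ β := by
          refine Finset.sum_congr rfl fun γ _ => Finset.sum_mul _ _ _
      _ = ∑ α, ∑ γ, A α γ * A⁻¹ γ β := Finset.sum_comm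
      _ = ∑ α, (A * A⁻¹) α β := by
          refine Finset.sum_congr rfl fun α _ => (Matrix.mul_apply).symm
      _ = ∑ α, (1 : Matrix (Fin M) (Fin M) ℝ) α β := by rw [hAAinv]
      _ = 1 := by simp [Matrix.one_apply]
  have hRcol : ∀ β, ∑ α, (B * A⁻¹) α β = 1 := by
    intro β
    calc ∑ α, (B * A⁻¹) α β = ∑ α, ∑ γ, B α γ * A⁻¹ γ β := by
          refine Finset.sum_congr rfl fun α _ => Matrix.mul_apply
      _ = ∑ γ, ∑ α, B α γ * A⁻¹ γ β := Finset.sum_comm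
      _ = ∑ γ, (∑ α, B α γ) * A⁻¹ γ β := by
          refine Finset.sum_congr rfl fun γ _ => (Finset.sum_mul _ _ _).symm
      _ = ∑ γ, A⁻¹ γ β := by
          refine Finset.sum_congr rfl fun γ _ => ?_
          rw [hGcol t ht0 γ, one_mul]
      _ = 1 := hAinvcol β
  have hAinvfix : A⁻¹ *ᵥ L = L := by
    conv_lhs => rw [← hGfix s hs0]
    rw [Matrix.mulVec_mulVec, hAinvA, Matrix.one_mulVec]
  have hRfix : (B * A⁻¹) *ᵥ L = L := by
    rw [← Matrix.mulVec_mulVec, hAinvfix, hGfix t ht0]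
  have hcomp : B *ᵥ q = (B * A⁻¹) *ᵥ (A *ᵥ q) := by
    rw [Matrix.mulVec_mulVec, Matrix.mul_assoc, hAinvA, Matrix.mul_one]
  rw [hcomp] at hGtq ⊢
  exact dpi (B * A⁻¹) (hMarkov s hs t ht hst) hRcol L (A *ᵥ q) hΛπpos hRfix hGsq hGtq
end

section
/- Theorem B.1 (weak lumpability and the steady state, after Kemeny–Snell): Let T be a column-stochastic N×N matrix that is regular (some power Tⁿ has all entries strictly positive) with steady state π (T π = π, π a probability vector; regularity makes π strictly positive). Say the lumped process with initial distribution p is a homogeneous Markov chain with transition matrix 𝒢 if for all n ≥ 1 and all mesostates α₀, …, αₙ: ∑_{x₀,…,xₙ : c x_k = α_k for all k} T xₙ x_{n−1} ⋯ T x₁ x₀ · p x₀ = 𝒢 αₙ α_{n−1} ⋯ 𝒢 α₁ α₀ · (Λp) α₀. If there exists a probability vector p and a column-stochastic matrix 𝒢 such that the lumped process with initial distribution p is a homogeneous Markov chain with transition matrix 𝒢, then the lumped process with initial distribution π is a homogeneous Markov chain whose transition matrix is given by G α β = ∑_{x : c x = α} ∑_{y : c y = β} T x y · π y / (Λπ)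 β. -/
open Matrix Finset

/-- The lumped process with initial distribution `p` is a homogeneous Markov chain with
transition matrix `𝒢`: all its joint distributions factorize through `𝒢`. -/
def IsLumpedMarkov {N M : ℕ} (T : Matrix (Fin N) (Fin N) ℝ) (c : Fin N → Fin M)
    (p : Fin N → ℝ) (G : Matrix (Fin M) (Fin M) ℝ) : Prop :=
  ∀ n : ℕ, 1 ≤ n → ∀ α : Fin (n + 1) → Fin M,
    pathProb T c p n α = (∏ k : Fin n, G (α k.succ) (α k.castSucc)) * lump c p (α 0)


open Filter Topology

section Aux


variable {N : ℕ} {T : Matrix (Fin N) (Fin N) ℝ}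

lemma pow_col_sum (hTsum : ∀ y, ∑ x, T x y = 1) : ∀ m y, ∑ x, (T ^ m) x y = 1 := by
  intro m
  induction m with
  | zero => intro y; simp [Matrix.one_apply, Finset.sum_ite_eq]
  | succ m ih =>
    intro y
    simp only [pow_succ, Matrix.mul_apply]
    rw [Finset.sum_comm]
    simp_rw [← Finset.sum_mul, ih]
    simpa using hTsum y

lemma pow_entry_nonneg (hTnonneg : ∀ x y, 0 ≤ T x y) : ∀ m x y, 0 ≤ (T ^ m) x y := by
  intro m
  induction m with
  | zero => intro x y; simp [Matrix.one_apply]; positivity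
  | succ m ih =>
    intro x y
    simp only [pow_succ, Matrix.mul_apply]
    exact Finset.sum_nonneg fun z _ => mul_nonneg (ih x z) (hTnonneg z y)

lemma mulVec_sum_eq (hTsum : ∀ y, ∑ x, T x y = 1) (v : Fin N → ℝ) :
    ∑ x, (T *ᵥ v) x = ∑ x, v x := by
  simp only [Matrix.mulVec, dotProduct]
  rw [Finset.sum_comm]
  simp_rw [← Finset.sum_mul, hTsum, one_mul]

lemma l1_mulVec_le (hTnonneg : ∀ x y, 0 ≤ T x y) (hTsum : ∀ y, ∑ x, T x y = 1)
    (v : Fin N → ℝ) : ∑ x, |(T *ᵥ v) x| ≤ ∑ x, |v x| := by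
  have : ∀ x, |(T *ᵥ v) x| ≤ ∑ y, T x y * |v y| := by
    intro x
    have h1 : |(T *ᵥ v) x| ≤ ∑ y, |T x y * v y| := by
      simpa [Matrix.mulVec, dotProduct] using
        Finset.abs_sum_le_sum_abs (fun y => T x y * v y) Finset.univ
    exact h1.trans (Finset.sum_le_sum fun y _ => by
      rw [abs_mul, abs_of_nonneg (hTnonneg x y)])
  refine (Finset.sum_le_sum fun x _ => this x).trans ?_
  rw [Finset.sum_comm]
  simp_rw [← Finset.sum_mul, hTsum, one_mul]
  exact le_refl _

lemma l1_contract {A : Matrix (Fin N) (Fin N) ℝ} (hN : 0 < N)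
    (hA : ∀ x y, 0 < A x y) (hAs : ∀ y, ∑ x, A x y = 1) :
    ∃ ρ : ℝ, 0 ≤ ρ ∧ ρ < 1 ∧ ∀ v : Fin N → ℝ, (∑ x, v x = 0) →
      ∑ x, |(A *ᵥ v) x| ≤ ρ * ∑ x, |v x| := by
  have hne : (Finset.univ : Finset (Fin N × Fin N)).Nonempty := by
    exact ⟨(⟨0, hN⟩, ⟨0, hN⟩), Finset.mem_univ _⟩
  set δ := Finset.univ.inf' hne (fun q : Fin N × Fin N => A q.1 q.2) with hδ
  have hδpos : 0 < δ := by
    rw [hδ, Finset.lt_inf'_iff]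
    exact fun b _ => hA b.1 b.2
  have hδle : ∀ x y, δ ≤ A x y := fun x y => Finset.inf'_le _ (Finset.mem_univ (x, y))
  have hNδ : (N : ℝ) * δ ≤ 1 := by
    have := hAs ⟨0, hN⟩
    calc (N : ℝ) * δ = ∑ _x : Fin N, δ := by simp [mul_comm]
    _ ≤ ∑ x, A x ⟨0, hN⟩ := Finset.sum_le_sum fun x _ => hδle x _
    _ = 1 := hAs _
  refine ⟨1 - N * δ, by linarith, by
    have : (0:ℝ) < N * δ := by positivity
    linarith, ?_⟩
  intro v hv
  have key : ∀ x, (A *ᵥ v) x = ∑ y, (A x y - δ) * v y := by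
    intro x
    simp only [Matrix.mulVec, dotProduct, sub_mul]
    rw [Finset.sum_sub_distrib, ← Finset.mul_sum, hv, mul_zero, sub_zero]
  calc ∑ x, |(A *ᵥ v) x| ≤ ∑ x, ∑ y, (A x y - δ) * |v y| := by
        refine Finset.sum_le_sum fun x _ => ?_
        rw [key]
        have h1 : |∑ y, (A x y - δ) * v y| ≤ ∑ y, |(A x y - δ) * v y| :=
          Finset.abs_sum_le_sum_abs (fun y => (A x y - δ) * v y) Finset.univ
        exact h1.trans (Finset.sum_le_sum fun y _ => by
          rw [abs_mul, abs_of_nonneg (by linarith [hδle x y])])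
  _ = ∑ y, (1 - N * δ) * |v y| := by
        rw [Finset.sum_comm]
        congr 1; ext y
        rw [← Finset.sum_mul]
        congr 1
        rw [Finset.sum_sub_distrib, hAs]
        simp [mul_comm]
  _ = (1 - N * δ) * ∑ x, |v x| := by rw [Finset.mul_sum]

lemma tendsto_pow_mulVec (hTnonneg : ∀ x y, 0 ≤ T x y) (hTsum : ∀ y, ∑ x, T x y = 1)
    (hreg : ∃ n : ℕ, ∀ x y, 0 < (T ^ n) x y)
    (π : Fin N → ℝ) (hπsum : ∑ x, π x = 1) (hfix : T *ᵥ π = π)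
    (p : Fin N → ℝ) (hpsum : ∑ x, p x = 1) :
    Tendsto (fun m => (T ^ m) *ᵥ p) atTop (𝓝 π) := by
  have hN : 0 < N := by
    rcases Nat.eq_zero_or_pos N with h | h
    · subst h; simp at hπsum
    · exact h
  obtain ⟨n₀, hpos⟩ := hreg
  set nn := n₀ + 1 with hnn
  have hApos : ∀ x y, 0 < (T ^ nn) x y := by
    intro x y
    have hcol : ∃ z, 0 < T z y := by
      by_contra hz; push_neg at hz
      have h0 : ∑ z, T z y = 0 :=
        Finset.sum_eq_zero fun z _ => le_antisymm (hz z) (hTnonneg z y)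
      rw [hTsum y] at h0; norm_num at h0
    obtain ⟨z, hz⟩ := hcol
    have hrw : (T ^ nn) x y = ∑ w, (T ^ n₀) x w * T w y := by
      rw [pow_succ, Matrix.mul_apply]
    rw [hrw]
    exact lt_of_lt_of_le (mul_pos (hpos x z) hz)
      (Finset.single_le_sum (f := fun w => (T ^ n₀) x w * T w y)
        (fun w _ => mul_nonneg (pow_entry_nonneg hTnonneg n₀ x w) (hTnonneg w y))
        (Finset.mem_univ z))
  obtain ⟨ρ, hρ0, hρ1, hcontract⟩ := l1_contract hN hApos (pow_col_sum hTsum nn)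
  have hfixpow : ∀ m, (T ^ m) *ᵥ π = π := by
    intro m
    induction m with
    | zero => simp
    | succ m ih => rw [pow_succ', ← Matrix.mulVec_mulVec, ih, hfix]
  set v : Fin N → ℝ := fun x => p x - π x with hv
  have hvsum : ∑ x, v x = 0 := by
    simp only [hv, Finset.sum_sub_distrib, hpsum, hπsum, sub_self]
  have hdiff : ∀ m x, ((T ^ m) *ᵥ p) x - π x = ((T ^ m) *ᵥ v) x := by
    intro m x
    have hveq : v = p - π := rfl
    rw [hveq, Matrix.mulVec_sub, Pi.sub_apply, hfixpow]
  have hmono : ∀ (r : ℕ) (w : Fin N → ℝ), ∑ x, |((T ^ r) *ᵥ w) x| ≤ ∑ x, |w x| := by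
    intro r w
    induction r with
    | zero => simp [Matrix.one_mulVec]
    | succ r ih =>
      rw [pow_succ', ← Matrix.mulVec_mulVec]
      exact (l1_mulVec_le hTnonneg hTsum _).trans ih
  have hzero : ∀ m, ∑ x, ((T ^ m) *ᵥ v) x = 0 := by
    intro m
    induction m with
    | zero => simpa [Matrix.one_mulVec] using hvsum
    | succ m ih => rw [pow_succ', ← Matrix.mulVec_mulVec, mulVec_sum_eq hTsum, ih]
  have hq : ∀ q : ℕ, ∑ x, |((T ^ (nn * q)) *ᵥ v) x| ≤ ρ ^ q * ∑ x, |v x| := by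
    intro q
    induction q with
    | zero => simp [Matrix.one_mulVec]
    | succ q ih =>
      have hsplit : T ^ (nn * (q + 1)) = T ^ nn * T ^ (nn * q) := by
        rw [← pow_add]; ring_nf
      rw [hsplit, ← Matrix.mulVec_mulVec]
      calc ∑ x, |((T ^ nn) *ᵥ ((T ^ (nn * q)) *ᵥ v)) x|
          ≤ ρ * ∑ x, |((T ^ (nn * q)) *ᵥ v) x| := hcontract _ (hzero _)
        _ ≤ ρ * (ρ ^ q * ∑ x, |v x|) := mul_le_mul_of_nonneg_left ih hρ0
        _ = ρ ^ (q + 1) * ∑ x, |v x| := by ring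
  have hbound : ∀ m, ∑ x, |((T ^ m) *ᵥ v) x| ≤ ρ ^ (m / nn) * ∑ x, |v x| := by
    intro m
    have hm : m % nn + nn * (m / nn) = m := Nat.mod_add_div m nn
    calc ∑ x, |((T ^ m) *ᵥ v) x|
        = ∑ x, |((T ^ (m % nn)) *ᵥ ((T ^ (nn * (m / nn))) *ᵥ v)) x| := by
          rw [Matrix.mulVec_mulVec, ← pow_add, hm]
      _ ≤ ∑ x, |((T ^ (nn * (m / nn))) *ᵥ v) x| := hmono _ _
      _ ≤ ρ ^ (m / nn) * ∑ x, |v x| := hq _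
  have hdivtop : Tendsto (fun m : ℕ => m / nn) atTop atTop :=
    tendsto_atTop_atTop.2 fun b => ⟨nn * b, fun m hm =>
      (Nat.le_div_iff_mul_le (by omega : 0 < nn)).2 (by rw [mul_comm]; exact hm)⟩
  have hgtend : Tendsto (fun m : ℕ => ρ ^ (m / nn) * ∑ x, |v x|) atTop (𝓝 0) := by
    have h1 : Tendsto (fun q : ℕ => ρ ^ q) atTop (𝓝 0) :=
      tendsto_pow_atTop_nhds_zero_of_lt_one hρ0 hρ1
    have := (h1.comp hdivtop).mul_const (∑ x, |v x|)
    simpa using this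
  rw [tendsto_pi_nhds]
  intro x
  have h0 : Tendsto (fun m => ((T ^ m) *ᵥ p) x - π x) atTop (𝓝 0) := by
    apply squeeze_zero_norm (fun m => ?_) hgtend
    rw [Real.norm_eq_abs, hdiff]
    exact le_trans (Finset.single_le_sum (f := fun x' => |((T ^ m) *ᵥ v) x'|) (fun x' _ => abs_nonneg _) (Finset.mem_univ x))
      (hbound m)
  have := h0.add_const (π x)
  simpa using this

end Aux


lemma sum_pi_succ {n : ℕ} {β : Type*} [Fintype β] (g : (Fin (n+1) → β) → ℝ) :
    ∑ x : Fin (n+1) → β, g x = ∑ y : β, ∑ x : Fin n → β, g (Fin.cons y x) := by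
  rw [← (Fintype.sum_equiv (Fin.consEquiv fun _ => β) (fun p => g (Fin.cons p.1 p.2)) g
    (fun p => rfl)), Fintype.sum_prod_type]

lemma pathProb_zero {N M : ℕ} (T : Matrix (Fin N) (Fin N) ℝ) (c : Fin N → Fin M)
    (q : Fin N → ℝ) (α : Fin 1 → Fin M) :
    pathProb T c q 0 α = lump c q (α 0) := by
  rw [pathProb, sum_pi_succ]
  simp [Fin.forall_fin_one, lump]

lemma pathProb_mulVec {N M : ℕ} (T : Matrix (Fin N) (Fin N) ℝ) (c : Fin N → Fin M)
    (q : Fin N → ℝ) (n : ℕ) (α : Fin (n + 1) → Fin M) :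
    pathProb T c (T *ᵥ q) n α = ∑ β, pathProb T c q (n + 1) (Fin.cons β α) := by
  have key : ∀ x' : Fin (n+2) → Fin N,
      (∑ β, if (∀ k, c (x' k) = Fin.cons β α k)
        then (∏ k : Fin (n+1), T (x' k.succ) (x' k.castSucc)) * q (x' 0) else 0)
      = if (∀ k : Fin (n+1), c (x' k.succ) = α k)
        then (∏ k : Fin (n+1), T (x' k.succ) (x' k.castSucc)) * q (x' 0) else 0 := by
    intro x'
    have hcond : ∀ β, (∀ k, c (x' k) = Fin.cons β α k) ↔
        (c (x' 0) = β ∧ ∀ k : Fin (n+1), c (x' k.succ) = α k) := by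
      intro β
      rw [Fin.forall_fin_succ]
      simp
    simp only [hcond, ite_and]
    rw [Finset.sum_ite_eq]
    simp
  calc pathProb T c (T *ᵥ q) n α
      = ∑ x : Fin (n+1) → Fin N, ∑ y,
          if (∀ k, c (x k) = α k)
          then (∏ k : Fin n, T (x k.succ) (x k.castSucc)) * (T (x 0) y * q y) else 0 := by
        rw [pathProb]
        refine Finset.sum_congr rfl fun x _ => ?_
        by_cases hx : ∀ k, c (x k) = α k
        · simp only [if_pos hx, Matrix.mulVec, dotProduct, Finset.mul_sum]
        · simp [hx]
    _ = ∑ y, ∑ x : Fin (n+1) → Fin N,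
          if (∀ k, c (x k) = α k)
          then (∏ k : Fin n, T (x k.succ) (x k.castSucc)) * (T (x 0) y * q y) else 0 :=
        Finset.sum_comm
    _ = ∑ y, ∑ x : Fin (n+1) → Fin N,
          if (∀ k, c (x k) = α k)
          then (∏ k : Fin (n+1), T ((Fin.cons y x : Fin (n+2) → Fin N) k.succ)
              ((Fin.cons y x : Fin (n+2) → Fin N) k.castSucc))
            * q ((Fin.cons y x : Fin (n+2) → Fin N) 0) else 0 := by
        refine Finset.sum_congr rfl fun y _ => Finset.sum_congr rfl fun x _ => ?_
        by_cases hx : ∀ k, c (x k) = α k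
        · rw [if_pos hx, if_pos hx, Fin.prod_univ_succ]
          simp only [Fin.cons_succ, Fin.castSucc_zero, Fin.cons_zero, ← Fin.succ_castSucc]
          ring
        · rw [if_neg hx, if_neg hx]
    _ = ∑ x' : Fin (n+2) → Fin N,
          if (∀ k : Fin (n+1), c (x' k.succ) = α k)
          then (∏ k : Fin (n+1), T (x' k.succ) (x' k.castSucc)) * q (x' 0) else 0 := by
        rw [sum_pi_succ (fun x' => if (∀ k : Fin (n+1), c (x' k.succ) = α k)
          then (∏ k : Fin (n+1), T (x' k.succ) (x' k.castSucc)) * q (x' 0) else 0)]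
        refine Finset.sum_congr rfl fun y _ => Finset.sum_congr rfl fun x _ => ?_
        simp only [Fin.cons_succ, Fin.cons_zero]
    _ = ∑ x' : Fin (n+2) → Fin N, ∑ β,
          if (∀ k, c (x' k) = Fin.cons β α k)
          then (∏ k : Fin (n+1), T (x' k.succ) (x' k.castSucc)) * q (x' 0) else 0 := by
        exact (Finset.sum_congr rfl fun x' _ => key x').symm
    _ = ∑ β, pathProb T c q (n + 1) (Fin.cons β α) := by
        rw [Finset.sum_comm]
        rfl

lemma pathProb_one {N M : ℕ} (T : Matrix (Fin N) (Fin N) ℝ) (c : Fin N → Fin M)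
    (q : Fin N → ℝ) (α : Fin 2 → Fin M) :
    pathProb T c q 1 α = ∑ x, ∑ y, if c x = α 1 ∧ c y = α 0 then T x y * q y else 0 := by
  calc pathProb T c q 1 α
      = ∑ y, ∑ x : Fin 1 → Fin N,
          (if ∀ k, c ((Fin.cons y x : Fin 2 → Fin N) k) = α k
           then (∏ k : Fin 1, T ((Fin.cons y x : Fin 2 → Fin N) k.succ)
             ((Fin.cons y x : Fin 2 → Fin N) k.castSucc)) * q ((Fin.cons y x : Fin 2 → Fin N) 0)
           else 0) := by rw [pathProb, sum_pi_succ]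
    _ = ∑ y, ∑ z, ∑ w : Fin 0 → Fin N,
          (if ∀ k, c ((Fin.cons y (Fin.cons z w) : Fin 2 → Fin N) k) = α k
           then (∏ k : Fin 1, T ((Fin.cons y (Fin.cons z w) : Fin 2 → Fin N) k.succ)
             ((Fin.cons y (Fin.cons z w) : Fin 2 → Fin N) k.castSucc))
             * q ((Fin.cons y (Fin.cons z w) : Fin 2 → Fin N) 0)
           else 0) :=
        Finset.sum_congr rfl fun y _ => sum_pi_succ _
    _ = ∑ y, ∑ z, if c y = α 0 ∧ c z = α 1 then T z y * q y else 0 := by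
        refine Finset.sum_congr rfl fun y _ => Finset.sum_congr rfl fun z _ => ?_
        rw [Fintype.sum_unique]
        have h1 : (Fin.cons y (Fin.cons z (default : Fin 0 → Fin N)) : Fin 2 → Fin N) 1 = z := rfl
        have h0 : (Fin.cons y (Fin.cons z (default : Fin 0 → Fin N)) : Fin 2 → Fin N) 0 = y := rfl
        have h1' : (Fin.cons y (Fin.cons z (default : Fin 0 → Fin N)) : Fin 2 → Fin N)
          ((0 : Fin 1)).succ = z := rfl
        have h0' : (Fin.cons y (Fin.cons z (default : Fin 0 → Fin N)) : Fin 2 → Fin N)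
          ((0 : Fin 1)).castSucc = y := rfl
        have ha : Fin.succ (0 : Fin 1) = (1 : Fin 2) := rfl
        simp only [Fin.forall_fin_succ, Fin.forall_fin_one, Fin.cons_succ, Fin.cons_zero,
          Fin.prod_univ_one, h0, h1, h0', h1', ha, IsEmpty.forall_iff, and_true]
    _ = ∑ x, ∑ y, if c x = α 1 ∧ c y = α 0 then T x y * q y else 0 := by
        rw [Finset.sum_comm]
        refine Finset.sum_congr rfl fun x _ => Finset.sum_congr rfl fun y _ => ?_
        by_cases h1 : c x = α 1 <;> by_cases h2 : c y = α 0 <;> simp [h1, h2]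

lemma lump_mulVec {N M : ℕ} {T : Matrix (Fin N) (Fin N) ℝ} {c : Fin N → Fin M}
    {p : Fin N → ℝ} {G : Matrix (Fin M) (Fin M) ℝ} (hG : IsLumpedMarkov T c p G) (γ : Fin M) :
    lump c (T *ᵥ p) γ = ∑ β, G γ β * lump c p β := by
  rw [← pathProb_zero T c (T *ᵥ p) (fun _ => γ), pathProb_mulVec]
  refine Finset.sum_congr rfl fun β _ => ?_
  rw [hG 1 le_rfl (Fin.cons β fun _ => γ), Fin.prod_univ_one]
  have h1 : (Fin.cons β (fun _ => γ) : Fin 2 → Fin M) ((0 : Fin 1)).succ = γ := rfl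
  have h0 : (Fin.cons β (fun _ => γ) : Fin 2 → Fin M) ((0 : Fin 1)).castSucc = β := rfl
  have h0' : (Fin.cons β (fun _ => γ) : Fin 2 → Fin M) 0 = β := rfl
  rw [h1, h0, h0']

lemma markov_mulVec {N M : ℕ} {T : Matrix (Fin N) (Fin N) ℝ} {c : Fin N → Fin M}
    {p : Fin N → ℝ} {G : Matrix (Fin M) (Fin M) ℝ} (hG : IsLumpedMarkov T c p G) :
    IsLumpedMarkov T c (T *ᵥ p) G := by
  intro n hn α
  rw [pathProb_mulVec]
  have hterm : ∀ β, pathProb T c p (n+1) (Fin.cons β α)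
      = ((∏ k : Fin n, G (α k.succ) (α k.castSucc)) * G (α 0) β) * lump c p β := by
    intro β
    rw [hG (n+1) (by omega) (Fin.cons β α), Fin.prod_univ_succ]
    simp only [Fin.cons_succ, Fin.castSucc_zero, Fin.cons_zero, ← Fin.succ_castSucc]
    ring
  calc ∑ β, pathProb T c p (n+1) (Fin.cons β α)
      = ∑ β, ((∏ k : Fin n, G (α k.succ) (α k.castSucc)) * G (α 0) β) * lump c p β :=
        Finset.sum_congr rfl fun β _ => hterm β
    _ = (∏ k : Fin n, G (α k.succ) (α k.castSucc)) * ∑ β, G (α 0) β * lump c p β := by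
        rw [Finset.mul_sum]
        exact Finset.sum_congr rfl fun β _ => by ring
    _ = (∏ k : Fin n, G (α k.succ) (α k.castSucc)) * lump c (T *ᵥ p) (α 0) := by
        rw [lump_mulVec hG]

/-- **Theorem B.1 (weak lumpability and the steady state, after Kemeny–Snell).**
Let `T` be a regular column-stochastic matrix with steady state `π`. If the lumped process
is a homogeneous Markov chain for *some* initial probability vector `p` and some
column-stochastic transition matrix `𝒢`, then the lumped process started from `π` is a
homogeneous Markov chain with transition matrix
`G α β = ∑_{x : c x = α} ∑_{y : c y = β} T x y · π y / (Λπ) β`. -/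
theorem weak_lumpability_steady_state {N M : ℕ} (c : Fin N → Fin M)
    (T : Matrix (Fin N) (Fin N) ℝ)
    (hTnonneg : ∀ x y, 0 ≤ T x y) (hTsum : ∀ y, ∑ x, T x y = 1)
    (hreg : ∃ n : ℕ, ∀ x y, 0 < (T ^ n) x y)
    (π : Fin N → ℝ) (hπ : ∀ x, 0 ≤ π x) (hπsum : ∑ x, π x = 1)
    (hfix : T *ᵥ π = π)
    (h : ∃ (p : Fin N → ℝ) (G : Matrix (Fin M) (Fin M) ℝ),
      (∀ x, 0 ≤ p x) ∧ (∑ x, p x = 1) ∧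
      (∀ α β, 0 ≤ G α β) ∧ (∀ β, ∑ α, G α β = 1) ∧
      IsLumpedMarkov T c p G) :
    IsLumpedMarkov T c π
      (Matrix.of fun α β =>
        ∑ x, ∑ y, if c x = α ∧ c y = β then T x y * π y / lump c π β else 0) := by
  obtain ⟨p, 𝒢, hp0, hp1, h𝒢0, h𝒢1, hpM⟩ := h
  -- The Markov property is preserved along the orbit of T
  have hMm : ∀ m : ℕ, IsLumpedMarkov T c ((T ^ m) *ᵥ p) 𝒢 := by
    intro m
    induction m with
    | zero => simp only [pow_zero, Matrix.one_mulVec]; exact hpM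
    | succ m ih =>
      rw [pow_succ', ← Matrix.mulVec_mulVec]
      exact markov_mulVec ih
  have hconv : Tendsto (fun m => (T ^ m) *ᵥ p) atTop (𝓝 π) :=
    tendsto_pow_mulVec hTnonneg hTsum hreg π hπsum hfix p hp1
  -- Pass to the limit: the Markov property holds at π with matrix 𝒢
  have hMπ : IsLumpedMarkov T c π 𝒢 := by
    intro n hn α
    set F : (Fin N → ℝ) → ℝ := fun q =>
      pathProb T c q n α - (∏ k : Fin n, 𝒢 (α k.succ) (α k.castSucc)) * lump c q (α 0) with hF
    have hcont : Continuous F := by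
      apply Continuous.sub
      · simp only [pathProb]
        refine continuous_finset_sum _ fun x _ => ?_
        by_cases hx : ∀ k, c (x k) = α k
        · simp only [if_pos hx]
          exact continuous_const.mul (continuous_apply _)
        · simp only [if_neg hx]; exact continuous_const
      · refine Continuous.mul continuous_const ?_
        simp only [lump]
        refine continuous_finset_sum _ fun x _ => ?_
        by_cases hx : c x = α 0
        · simp only [if_pos hx]; exact continuous_apply x
        · simp only [if_neg hx]; exact continuous_const
    have hzero : ∀ m : ℕ, F ((T ^ m) *ᵥ p) = 0 := by
      intro m
      rw [hF]
      simp only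
      rw [hMm m n hn α, sub_self]
    have h1 : Tendsto (fun m => F ((T ^ m) *ᵥ p)) atTop (𝓝 (F π)) :=
      (hcont.tendsto π).comp hconv
    have h2 : F π = 0 := by
      have h3 : Tendsto (fun _ : ℕ => (0 : ℝ)) atTop (𝓝 (F π)) := by
        simpa [hzero] using h1
      exact tendsto_nhds_unique h3 tendsto_const_nhds
    rw [hF] at h2
    simp only at h2
    linarith
  -- π is strictly positive by regularity
  have hπpos : ∀ x, 0 < π x := by
    obtain ⟨n₀, hpos⟩ := hreg
    have hfixpow : (T ^ n₀) *ᵥ π = π := by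
      clear hpos
      induction n₀ with
      | zero => simp [Matrix.one_mulVec]
      | succ m ih => rw [pow_succ', ← Matrix.mulVec_mulVec, ih, hfix]
    intro x
    have hx : π x = ∑ y, (T ^ n₀) x y * π y := by
      conv_lhs => rw [← hfixpow]
      simp [Matrix.mulVec, dotProduct]
    obtain ⟨y₀, hy₀⟩ : ∃ y, 0 < π y := by
      by_contra hc
      push_neg at hc
      have h0 : ∑ y, π y = 0 := Finset.sum_eq_zero fun y _ => le_antisymm (hc y) (hπ y)
      rw [hπsum] at h0; norm_num at h0
    rw [hx]
    exact lt_of_lt_of_le (mul_pos (hpos x y₀) hy₀)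
      (Finset.single_le_sum (f := fun y => (T ^ n₀) x y * π y)
        (fun y _ => mul_nonneg (le_of_lt (hpos x y)) (hπ y)) (Finset.mem_univ y₀))
  have hlumppos : ∀ β, (∃ x, c x = β) → 0 < lump c π β := by
    rintro β ⟨x₀, hx₀⟩
    have hle : (if c x₀ = β then π x₀ else 0) ≤ lump c π β := by
      rw [lump]
      exact Finset.single_le_sum (f := fun x => if c x = β then π x else 0)
        (fun x _ => by by_cases hh : c x = β <;> simp [hh, hπ x]) (Finset.mem_univ x₀)
    rw [if_pos hx₀] at hle
    exact lt_of_lt_of_le (hπpos x₀) hle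
  -- The stated matrix agrees with 𝒢 on the relevant entries
  have hGeq : ∀ β' β : Fin M, (∃ y, c y = β) →
      (Matrix.of fun α β => ∑ x, ∑ y,
        if c x = α ∧ c y = β then T x y * π y / lump c π β else 0) β' β = 𝒢 β' β := by
    rintro β' β hβ
    have hL : lump c π β ≠ 0 := ne_of_gt (hlumppos β hβ)
    have e0 : (Fin.cons β (fun _ => β') : Fin 2 → Fin M) 0 = β := rfl
    have e1 : (Fin.cons β (fun _ => β') : Fin 2 → Fin M) 1 = β' := rfl
    have h1 : pathProb T c π 1 (Fin.cons β fun _ => β')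
        = ∑ x, ∑ y, if c x = β' ∧ c y = β then T x y * π y else 0 := by
      rw [pathProb_one]
      rw [e0, e1]
    have h2 : pathProb T c π 1 (Fin.cons β fun _ => β') = 𝒢 β' β * lump c π β := by
      rw [hMπ 1 le_rfl (Fin.cons β fun _ => β'), Fin.prod_univ_one]
      have f1 : (Fin.cons β (fun _ => β') : Fin 2 → Fin M) ((0 : Fin 1)).succ = β' := rfl
      have f0 : (Fin.cons β (fun _ => β') : Fin 2 → Fin M) ((0 : Fin 1)).castSucc = β := rfl
      rw [f1, f0, e0]
    have h3 : (Matrix.of fun α β => ∑ x, ∑ y,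
        if c x = α ∧ c y = β then T x y * π y / lump c π β else 0) β' β * lump c π β
        = ∑ x, ∑ y, if c x = β' ∧ c y = β then T x y * π y else 0 := by
      simp only [Matrix.of_apply]
      rw [Finset.sum_mul]
      refine Finset.sum_congr rfl fun x _ => ?_
      rw [Finset.sum_mul]
      refine Finset.sum_congr rfl fun y _ => ?_
      by_cases hxy : c x = β' ∧ c y = β
      · rw [if_pos hxy, if_pos hxy, div_mul_cancel₀ _ hL]
      · rw [if_neg hxy, if_neg hxy, zero_mul]
    refine mul_right_cancel₀ hL ?_
    rw [h3, ← h1, h2]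
  -- Final assembly
  intro n hn α
  by_cases hall : ∀ k, ∃ x, c x = α k
  · rw [hMπ n hn α]
    congr 1
    refine Finset.prod_congr rfl fun k _ => ?_
    exact (hGeq (α k.succ) (α k.castSucc) (hall k.castSucc)).symm
  · push_neg at hall
    obtain ⟨k, hk⟩ := hall
    have hLHS : pathProb T c π n α = 0 := by
      rw [pathProb]
      refine Finset.sum_eq_zero fun x _ => ?_
      rw [if_neg]
      intro hcond
      exact hk (x k) (hcond k)
    rw [hLHS]
    rcases Fin.eq_zero_or_eq_succ k with hk0 | ⟨j, hj⟩
    · have hl0 : lump c π (α 0) = 0 := by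
        rw [lump]
        refine Finset.sum_eq_zero fun x _ => ?_
        rw [if_neg]
        rw [hk0] at hk
        exact hk x
      rw [hl0, mul_zero]
    · have hGz : (Matrix.of fun α β => ∑ x, ∑ y,
          if c x = α ∧ c y = β then T x y * π y / lump c π β else 0) (α j.succ) (α j.castSucc)
          = 0 := by
        simp only [Matrix.of_apply]
        refine Finset.sum_eq_zero fun x _ => Finset.sum_eq_zero fun y _ => ?_
        rw [if_neg]
        rintro ⟨hx, -⟩
        exact hk x (hj ▸ hx)
      rw [Finset.prod_eq_zero (Finset.mem_univ j) hGz, zero_mul]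
end

section
/- Non-Markovian speed-up of bit erasure (Section 7.2): Let γ₀₁, γ₁₀ : [0,∞) → ℝ be continuous with γ₀₁(s) ≥ 0 for all s, and let p₀(0) ∈ [0,1]. For a rate function g : [0,∞) → ℝ define the solution of the two-state master equation ṗ₀ = γ₀₁ − (γ₀₁ + g)·p₀ by p₀[t; g] = exp(−∫₀ᵗ (γ₀₁(s) + g(s)) ds) · p₀(0) + ∫₀ᵗ exp(−∫ₛᵗ (γ₀₁(u) + g(u)) du) · γ₀₁(s) ds. Then for every t ≥ 0, p₀[t; γ₁₀] ≥ p₀[t; |γ₁₀|]; i.e. allowing the rate γ₁₀ to take negative values (a signature of non-Markovianity) can only increase the probability of having erased the bit to state 0 at any finite time, compared with the Markovian dynamics using |γ₁₀|. -/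
/-- Explicit solution of the two-state (bit) master equation
`ṗ₀ = γ₀₁ − (γ₀₁ + g) p₀` with initial value `p₀(0)`:
`p₀[t; g] = exp(−∫₀ᵗ (γ₀₁ + g)) p₀(0) + ∫₀ᵗ exp(−∫ₛᵗ (γ₀₁ + g)) γ₀₁(s) ds`. -/
noncomputable def bitSol (γ01 g : ℝ → ℝ) (p00 : ℝ) (t : ℝ) : ℝ :=
  Real.exp (-∫ s in (0:ℝ)..t, (γ01 s + g s)) * p00 +
    ∫ s in (0:ℝ)..t, Real.exp (-∫ u in s..t, (γ01 u + g u)) * γ01 s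

/-- Continuity of `s ↦ ∫ u in s..t, f u` for continuous `f`. -/
lemma cont_upper (f : ℝ → ℝ) (hf : Continuous f) (t : ℝ) :
    Continuous fun s => ∫ u in s..t, f u := by
  have h1 : Continuous fun s => ∫ u in (0:ℝ)..s, f u :=
    intervalIntegral.continuous_primitive (fun a b => hf.intervalIntegrable a b) 0
  have : (fun s => ∫ u in s..t, f u)
      = fun s => (∫ u in (0:ℝ)..t, f u) - ∫ u in (0:ℝ)..s, f u := by
    funext s
    rw [intervalIntegral.integral_interval_sub_left (hf.intervalIntegrable 0 t)
      (hf.intervalIntegrable 0 s)]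
  rw [this]
  exact continuous_const.sub h1

/-- **Non-Markovian speed-up of bit erasure** (Section 7.2 of the paper).
For continuous rates `γ₀₁ ≥ 0` and `γ₁₀` (possibly negative, a signature of
non-Markovianity) and any initial occupation `p₀(0) ∈ [0,1]`, the probability of having
erased the bit to state `0` at any finite time `t ≥ 0` under the rate `γ₁₀` is at least
as large as under the Markovian dynamics with rate `|γ₁₀|`:
`p₀[t; γ₁₀] ≥ p₀[t; |γ₁₀|]`. -/
theorem nonMarkovian_speedup_erasure (γ01 γ10 : ℝ → ℝ)
    (hcont01 : Continuous γ01) (hcont10 : Continuous γ10)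
    (h01 : ∀ s, 0 ≤ γ01 s)
    (p00 : ℝ) (hp00 : p00 ∈ Set.Icc (0:ℝ) 1) :
    ∀ t : ℝ, 0 ≤ t →
      bitSol γ01 (fun s => |γ10 s|) p00 t ≤ bitSol γ01 γ10 p00 t := by
  intro t ht
  have hc1 : Continuous fun s => γ01 s + γ10 s := hcont01.add hcont10
  have hc2 : Continuous fun s => γ01 s + |γ10 s| := hcont01.add hcont10.abs
  have hmono : ∀ a b : ℝ, a ≤ b →
      (∫ u in a..b, (γ01 u + γ10 u)) ≤ ∫ u in a..b, (γ01 u + |γ10 u|) := by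
    intro a b hab
    apply intervalIntegral.integral_mono_on hab (hc1.intervalIntegrable a b)
      (hc2.intervalIntegrable a b)
    intro x _
    exact add_le_add (le_refl _) (le_abs_self _)
  unfold bitSol
  apply add_le_add
  · apply mul_le_mul_of_nonneg_right _ hp00.1
    exact Real.exp_le_exp.2 (neg_le_neg (hmono 0 t ht))
  · have hi1 : Continuous fun s => Real.exp (-∫ u in s..t, (γ01 u + γ10 u)) * γ01 s :=
      (((cont_upper _ hc1 t).neg).rexp).mul hcont01
    have hi2 : Continuous fun s => Real.exp (-∫ u in s..t, (γ01 u + |γ10 u|)) * γ01 s :=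
      (((cont_upper _ hc2 t).neg).rexp).mul hcont01
    apply intervalIntegral.integral_mono_on ht (hi2.intervalIntegrable 0 t)
      (hi1.intervalIntegrable 0 t)
    intro x hx
    apply mul_le_mul_of_nonneg_right _ (h01 x)
    exact Real.exp_le_exp.2 (neg_le_neg (hmono x t hx.2))
end
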